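/- Every semisimple MV-algebra admits an injective MV-algebra homomorphism into a unital commutative semisimple PMV-algebra. -/

import Mathlib

universe u v w

/-- An MV-algebra structure on the type `A`. -/
structure MVAlg (A : Type u) where
  oplus : A → A → A
  star : A → A
  zero : A
  oplus_comm : ∀ x y, oplus x y = oplus y x
  oplus_assoc : ∀ x y z, oplus (oplus x y) z = oplus x (oplus y z)
  oplus_zero : ∀ x, oplus x zero = x
  star_star : ∀ x, star (star x) = x
  oplus_one : ∀ x, oplus x (star zero) = star zero
  luk : ∀ x y, oplus (star (oplus (star x) y)) y = oplus (star (oplus (star y) x)) x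

namespace MVAlg

variable {A : Type u}

/-- The top element `1 := 0*`. -/
def one (M : MVAlg A) : A := M.star M.zero

/-- The underlying order: `x ≤ y` iff `x* ⊕ y = 1`. -/
def le (M : MVAlg A) (x y : A) : Prop := M.oplus (M.star x) y = M.one

/-- An ideal: contains `0`, closed under `⊕` and downward closed. -/
def IsIdeal (M : MVAlg A) (I : Set A) : Prop :=
  M.zero ∈ I ∧ (∀ x ∈ I, ∀ y ∈ I, M.oplus x y ∈ I) ∧ (∀ x y, M.le x y → y ∈ I → x ∈ I)

/-- A maximal proper ideal. -/
def IsMaximalIdeal (M : MVAlg A) (I : Set A) : Prop :=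
  M.IsIdeal I ∧ I ≠ Set.univ ∧ ∀ J, M.IsIdeal J → J ≠ Set.univ → I ⊆ J → J = I

/-- Semisimplicity: the intersection of all maximal proper ideals is `{0}`. -/
def Semisimple (M : MVAlg A) : Prop :=
  {x | ∀ I, M.IsMaximalIdeal I → x ∈ I} = {M.zero}

end MVAlg

/-- Homomorphisms of MV-algebras preserve `⊕`, `*` and `0`. -/
def MVHom {A : Type u} {B : Type v} (M : MVAlg A) (N : MVAlg B) (f : A → B) : Prop :=
  (∀ x y, f (M.oplus x y) = N.oplus (f x) (f y)) ∧
  (∀ x, f (M.star x) = N.star (f x)) ∧ f M.zero = N.zero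

/-- A unital commutative PMV-algebra. -/
structure PMVAlg (A : Type u) extends MVAlg A where
  mul : A → A → A
  mul_assoc : ∀ x y z, mul (mul x y) z = mul x (mul y z)
  mul_comm : ∀ x y, mul x y = mul y x
  mul_one : ∀ x, mul x toMVAlg.one = x
  mul_linear_right : ∀ x y z, toMVAlg.le y (toMVAlg.star z) →
    mul x (toMVAlg.oplus y z) = toMVAlg.oplus (mul x y) (mul x z)
  mul_linear_left : ∀ x y z, toMVAlg.le x (toMVAlg.star y) →
    mul (toMVAlg.oplus x y) z = toMVAlg.oplus (mul x z) (mul y z)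

/-- Semisimplicity of a PMV-algebra is semisimplicity of its MV-reduct. -/
def PMVAlg.Semisimple {A : Type u} (P : PMVAlg A) : Prop := P.toMVAlg.Semisimple

/-- Homomorphisms of PMV-algebras. -/
def PMVHom {A : Type u} {B : Type v} (P : PMVAlg A) (Q : PMVAlg B) (f : A → B) : Prop :=
  MVHom P.toMVAlg Q.toMVAlg f ∧ ∀ x y, f (P.mul x y) = Q.mul (f x) (f y)

/-- A Riesz MV-algebra: an MV-algebra with a scalar multiplication by elements of `[0,1]`. -/
structure RieszMVAlg (A : Type u) extends MVAlg A where
  smul : ℝ → A → A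
  smul_oplus : ∀ α : ℝ, α ∈ Set.Icc (0:ℝ) 1 → ∀ x y, toMVAlg.le x (toMVAlg.star y) →
    smul α (toMVAlg.oplus x y) = toMVAlg.oplus (smul α x) (smul α y)
  add_smul : ∀ α β : ℝ, α ∈ Set.Icc (0:ℝ) 1 → β ∈ Set.Icc (0:ℝ) 1 → α + β ≤ 1 → ∀ x,
    smul (α + β) x = toMVAlg.oplus (smul α x) (smul β x) ∧
    toMVAlg.le (smul α x) (toMVAlg.star (smul β x))
  mul_smul : ∀ α β : ℝ, α ∈ Set.Icc (0:ℝ) 1 → β ∈ Set.Icc (0:ℝ) 1 → ∀ x,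
    smul (α * β) x = smul α (smul β x)
  one_smul : ∀ x, smul 1 x = x

/-- Semisimplicity of a Riesz MV-algebra. -/
def RieszMVAlg.Semisimple {A : Type u} (R : RieszMVAlg A) : Prop := R.toMVAlg.Semisimple

/-- Homomorphisms of Riesz MV-algebras. -/
def RieszMVHom {A : Type u} {B : Type v} (R : RieszMVAlg A) (S : RieszMVAlg B) (f : A → B) : Prop :=
  MVHom R.toMVAlg S.toMVAlg f ∧
  ∀ α : ℝ, α ∈ Set.Icc (0:ℝ) 1 → ∀ x, f (R.smul α x) = S.smul α (f x)

/-- A unital commutative fMV-algebra. -/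
structure FMVAlg (A : Type u) extends PMVAlg A, RieszMVAlg A where
  smul_mul_left : ∀ α : ℝ, α ∈ Set.Icc (0:ℝ) 1 → ∀ x y,
    smul α (mul x y) = mul (smul α x) y
  smul_mul_right : ∀ α : ℝ, α ∈ Set.Icc (0:ℝ) 1 → ∀ x y,
    smul α (mul x y) = mul x (smul α y)

/-- Semisimplicity of an fMV-algebra. -/
def FMVAlg.Semisimple {A : Type u} (F : FMVAlg A) : Prop := F.toMVAlg.Semisimple

/-- Homomorphisms of fMV-algebras preserve `⊕`, `*`, `0`, `·` and scalar multiplication. -/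
def FMVHom {A : Type u} {B : Type v} (F : FMVAlg A) (G : FMVAlg B) (f : A → B) : Prop :=
  MVHom F.toMVAlg G.toMVAlg f ∧
  (∀ x y, f (F.mul x y) = G.mul (f x) (f y)) ∧
  (∀ α : ℝ, α ∈ Set.Icc (0:ℝ) 1 → ∀ x, f (F.smul α x) = G.smul α (f x))

namespace MVAlg

variable {A : Type u} {B' : Type v}

/-- truncated difference `x ⊖ y = (x* ⊕ y)*` -/
def sub (M : MVAlg A) (x y : A) : A := M.star (M.oplus (M.star x) y)

/-- Łukasiewicz product `x ⊙ y = (x* ⊕ y*)*` -/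
def odot (M : MVAlg A) (x y : A) : A := M.star (M.oplus (M.star x) (M.star y))

/-- join -/
def vee (M : MVAlg A) (x y : A) : A := M.oplus (M.sub x y) y

/-- meet -/
def wedge (M : MVAlg A) (x y : A) : A := M.star (M.vee (M.star x) (M.star y))

/-- n-fold truncated sum -/
def nsmul (M : MVAlg A) : ℕ → A → A
  | 0, _ => M.zero
  | n+1, x => M.oplus x (M.nsmul n x)

section Basic

variable (M : MVAlg A)

lemma zero_oplus (x : A) : M.oplus M.zero x = x := by rw [M.oplus_comm, M.oplus_zero]

lemma star_one : M.star M.one = M.zero := M.star_star _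

lemma star_inj {x y : A} (h : M.star x = M.star y) : x = y := by
  have := congrArg M.star h; rwa [M.star_star, M.star_star] at this

lemma oplus_one' (x : A) : M.oplus x M.one = M.one := M.oplus_one x

lemma one_oplus (x : A) : M.oplus M.one x = M.one := by
  rw [M.oplus_comm]; exact M.oplus_one x

lemma star_oplus_self (x : A) : M.oplus (M.star x) x = M.one := by
  have h := M.luk M.one x
  rw [show M.star M.one = M.zero from M.star_one] at h
  rw [M.zero_oplus] at h
  rw [show M.oplus (M.star x) M.one = M.one from M.oplus_one' _] at h
  rw [show M.star M.one = M.zero from M.star_one] at h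
  rw [M.zero_oplus] at h
  exact h

lemma oplus_star_self (x : A) : M.oplus x (M.star x) = M.one := by
  rw [M.oplus_comm]; exact M.star_oplus_self x

lemma le_refl (x : A) : M.le x x := M.star_oplus_self x

lemma le_top (x : A) : M.le x M.one := M.oplus_one' _

lemma bot_le (x : A) : M.le M.zero x := by
  show M.oplus (M.star M.zero) x = M.one
  exact M.one_oplus x

lemma le_antisymm {x y : A} (h1 : M.le x y) (h2 : M.le y x) : x = y := by
  have h := M.luk x y
  simp only [MVAlg.le] at h1 h2
  rw [h1, h2, M.star_one, M.zero_oplus, M.zero_oplus] at h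
  exact h.symm

lemma sub_oplus_of_le {x y : A} (h : M.le x y) : M.oplus (M.sub y x) x = y := by
  have hl := M.luk y x
  simp only [MVAlg.le] at h
  rw [h, M.star_one, M.zero_oplus] at hl
  simp only [MVAlg.sub]
  exact hl

lemma le_oplus_left (x c : A) : M.le x (M.oplus x c) := by
  show M.oplus (M.star x) (M.oplus x c) = M.one
  rw [← M.oplus_assoc, M.star_oplus_self, M.one_oplus]

lemma le_oplus_right (x c : A) : M.le x (M.oplus c x) := by
  rw [M.oplus_comm]; exact M.le_oplus_left x c

lemma le_iff_exists {x y : A} : M.le x y ↔ ∃ c, y = M.oplus x c := by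
  constructor
  · intro h
    exact ⟨M.sub y x, by rw [M.oplus_comm]; exact (M.sub_oplus_of_le h).symm⟩
  · rintro ⟨c, rfl⟩; exact M.le_oplus_left x c

lemma le_trans {x y z : A} (h1 : M.le x y) (h2 : M.le y z) : M.le x z := by
  obtain ⟨c, rfl⟩ := M.le_iff_exists.1 h1
  obtain ⟨d, rfl⟩ := M.le_iff_exists.1 h2
  rw [M.oplus_assoc]; exact M.le_oplus_left _ _

lemma oplus_le_oplus_right {x y : A} (c : A) (h : M.le x y) :
    M.le (M.oplus x c) (M.oplus y c) := by
  obtain ⟨d, rfl⟩ := M.le_iff_exists.1 h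
  rw [M.oplus_assoc, M.oplus_comm d c, ← M.oplus_assoc]
  exact M.le_oplus_left _ _

lemma oplus_le_oplus_left {x y : A} (c : A) (h : M.le x y) :
    M.le (M.oplus c x) (M.oplus c y) := by
  rw [M.oplus_comm c x, M.oplus_comm c y]; exact M.oplus_le_oplus_right c h

lemma oplus_le_oplus {x y u v : A} (h1 : M.le x y) (h2 : M.le u v) :
    M.le (M.oplus x u) (M.oplus y v) :=
  M.le_trans (M.oplus_le_oplus_right u h1) (M.oplus_le_oplus_left y h2)

lemma star_le_star {x y : A} (h : M.le x y) : M.le (M.star y) (M.star x) := by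
  show M.oplus (M.star (M.star y)) (M.star x) = M.one
  rw [M.star_star, M.oplus_comm]; exact h

lemma star_le_star' {x y : A} (h : M.le (M.star y) (M.star x)) : M.le x y := by
  have := M.star_le_star h
  rwa [M.star_star, M.star_star] at this

lemma le_zero_iff {x : A} : M.le x M.zero ↔ x = M.zero :=
  ⟨fun h => M.le_antisymm h (M.bot_le x), fun h => h ▸ M.le_refl _⟩

lemma one_le_iff {x : A} : M.le M.one x ↔ x = M.one :=
  ⟨fun h => (M.le_antisymm h (M.le_top x)).symm, fun h => h ▸ M.le_refl _⟩

lemma star_sub (x y : A) : M.star (M.sub x y) = M.oplus (M.star x) y := M.star_star _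

lemma sub_self (x : A) : M.sub x x = M.zero := by
  simp only [MVAlg.sub]; rw [M.star_oplus_self, M.star_one]

lemma sub_zero' (x : A) : M.sub x M.zero = x := by
  simp only [MVAlg.sub]; rw [M.oplus_zero, M.star_star]

lemma zero_sub' (x : A) : M.sub M.zero x = M.zero := by
  simp only [MVAlg.sub]
  rw [show M.star M.zero = M.one from rfl, M.one_oplus, M.star_one]

lemma sub_le_self (x y : A) : M.le (M.sub x y) x := by
  show M.oplus (M.star (M.sub x y)) x = M.one
  rw [M.star_sub, M.oplus_assoc, M.oplus_comm y x, ← M.oplus_assoc,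
    M.star_oplus_self, M.one_oplus]

lemma le_iff_sub_eq_zero {x y : A} : M.le x y ↔ M.sub x y = M.zero := by
  constructor
  · intro h; simp only [MVAlg.sub]; rw [h, M.star_one]
  · intro h
    simp only [MVAlg.sub] at h
    have h2 : M.star (M.star (M.oplus (M.star x) y)) = M.star M.zero := by rw [h]
    rw [M.star_star] at h2
    exact h2

lemma star_odot (x y : A) : M.star (M.odot x y) = M.oplus (M.star x) (M.star y) :=
  M.star_star _

lemma star_oplus (x y : A) : M.star (M.oplus x y) = M.odot (M.star x) (M.star y) := by
  simp only [MVAlg.odot]; rw [M.star_star, M.star_star]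

lemma odot_comm (x y : A) : M.odot x y = M.odot y x := by
  simp only [MVAlg.odot]; rw [M.oplus_comm]

lemma odot_assoc (x y z : A) : M.odot (M.odot x y) z = M.odot x (M.odot y z) := by
  simp only [MVAlg.odot]; rw [M.star_star, M.star_star, M.oplus_assoc]

lemma odot_one (x : A) : M.odot x M.one = x := by
  simp only [MVAlg.odot]; rw [M.star_one, M.oplus_zero, M.star_star]

lemma one_odot (x : A) : M.odot M.one x = x := by rw [M.odot_comm, M.odot_one]

lemma odot_zero (x : A) : M.odot x M.zero = M.zero := by
  simp only [MVAlg.odot]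
  rw [show M.star M.zero = M.one from rfl, M.oplus_one', M.star_one]

lemma odot_star_self (x : A) : M.odot x (M.star x) = M.zero := by
  simp only [MVAlg.odot]; rw [M.star_star, M.star_oplus_self, M.star_one]

lemma sub_eq_odot_star (x y : A) : M.sub x y = M.odot x (M.star y) := by
  simp only [MVAlg.odot, MVAlg.sub]; rw [M.star_star]

lemma vee_comm (x y : A) : M.vee x y = M.vee y x := M.luk x y

lemma le_vee_right (x y : A) : M.le y (M.vee x y) := M.le_oplus_right y _

lemma le_vee_left (x y : A) : M.le x (M.vee x y) := by
  rw [M.vee_comm]; exact M.le_vee_right y x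

lemma le_oplus_sub (x w : A) : M.le x (M.oplus w (M.sub x w)) := by
  rw [M.oplus_comm]; exact M.le_vee_left x w

lemma odot_le_odot_right {x y : A} (c : A) (h : M.le x y) :
    M.le (M.odot x c) (M.odot y c) := by
  simp only [MVAlg.odot]
  exact M.star_le_star (M.oplus_le_oplus_right _ (M.star_le_star h))

lemma odot_le_odot_left {x y : A} (c : A) (h : M.le x y) :
    M.le (M.odot c x) (M.odot c y) := by
  rw [M.odot_comm c x, M.odot_comm c y]; exact M.odot_le_odot_right c h

lemma sub_le_sub_right {x y : A} (c : A) (h : M.le x y) :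
    M.le (M.sub x c) (M.sub y c) := by
  rw [M.sub_eq_odot_star, M.sub_eq_odot_star]; exact M.odot_le_odot_right _ h

lemma sub_le_sub_left {x y : A} (c : A) (h : M.le x y) :
    M.le (M.sub c y) (M.sub c x) := by
  rw [M.sub_eq_odot_star, M.sub_eq_odot_star]
  exact M.odot_le_odot_left c (M.star_le_star h)

lemma vee_eq_of_le {x y : A} (h : M.le x y) : M.vee x y = y := by
  simp only [MVAlg.vee]; rw [M.le_iff_sub_eq_zero.1 h, M.zero_oplus]

lemma vee_le {x y z : A} (h1 : M.le x z) (h2 : M.le y z) : M.le (M.vee x y) z := by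
  have step : M.le (M.vee x y) (M.vee z y) :=
    M.oplus_le_oplus_right y (M.sub_le_sub_right y h1)
  rw [M.vee_comm z y, M.vee_eq_of_le h2] at step
  exact step

lemma le_oplus_star_odot (x y : A) : M.le x (M.oplus (M.star y) (M.odot x y)) := by
  have : M.odot x y = M.sub x (M.star y) := by rw [M.sub_eq_odot_star, M.star_star]
  rw [this]; exact M.le_oplus_sub x (M.star y)

lemma oplus_star_odot_le (y z : A) : M.le (M.odot (M.oplus (M.star y) z) y) z := by
  show M.oplus (M.star (M.odot (M.oplus (M.star y) z) y)) z = M.one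
  rw [M.star_odot, M.oplus_assoc, M.star_oplus_self]

lemma odot_le_iff {x y z : A} : M.le (M.odot x y) z ↔ M.le x (M.oplus (M.star y) z) := by
  constructor
  · intro h
    exact M.le_trans (M.le_oplus_star_odot x y) (M.oplus_le_oplus_left _ h)
  · intro h
    exact M.le_trans (M.odot_le_odot_right y h) (M.oplus_star_odot_le y z)

lemma sub_le_iff {x y z : A} : M.le (M.sub x y) z ↔ M.le x (M.oplus y z) := by
  rw [M.sub_eq_odot_star, M.odot_le_iff, M.star_star]

lemma odot_le_left (x y : A) : M.le (M.odot x y) x :=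
  M.odot_le_iff.2 (M.le_oplus_right x _)

lemma odot_le_right (x y : A) : M.le (M.odot x y) y := by
  rw [M.odot_comm]; exact M.odot_le_left y x

lemma odot_eq_zero_iff {x y : A} : M.odot x y = M.zero ↔ M.le x (M.star y) := by
  rw [← M.le_zero_iff, M.odot_le_iff, M.oplus_zero]

lemma oplus_eq_one_iff {x y : A} : M.oplus x y = M.one ↔ M.le (M.star x) y := by
  constructor
  · intro h; show M.oplus (M.star (M.star x)) y = M.one; rwa [M.star_star]
  · intro h
    refine M.one_le_iff.1 ?_
    have := M.oplus_le_oplus_left x h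
    rwa [M.oplus_star_self] at this

lemma oplus_eq_zero {x y : A} (h : M.oplus x y = M.zero) : x = M.zero :=
  M.le_zero_iff.1 (h ▸ M.le_oplus_left x y)

lemma odot_eq_one {x y : A} (h : M.odot x y = M.one) : x = M.one := by
  have h2 : M.star (M.odot x y) = M.zero := by rw [h, M.star_one]
  rw [M.star_odot] at h2
  have h3 := M.oplus_eq_zero h2
  have : x = M.star (M.star x) := (M.star_star x).symm
  rw [this, h3]; rfl

end Basic

end MVAlg
namespace MVAlg

variable {A : Type u}

section Lattice

variable (M : MVAlg A)

lemma wedge_unfold (x y : A) :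
    M.wedge x y = M.star (M.oplus (M.star (M.oplus x (M.star y))) (M.star y)) := by
  simp only [MVAlg.wedge, MVAlg.vee, MVAlg.sub]
  rw [M.star_star]

lemma wedge_eq (x y : A) : M.wedge x y = M.odot (M.oplus x (M.star y)) y := by
  rw [M.wedge_unfold]
  simp only [MVAlg.odot]

lemma wedge_comm (x y : A) : M.wedge x y = M.wedge y x := by
  simp only [MVAlg.wedge]; rw [M.vee_comm]

lemma wedge_le_left (x y : A) : M.le (M.wedge x y) x := by
  apply M.star_le_star'
  rw [show M.star (M.wedge x y) = M.vee (M.star x) (M.star y) from M.star_star _]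
  exact M.le_vee_left _ _

lemma wedge_le_right (x y : A) : M.le (M.wedge x y) y := by
  rw [M.wedge_comm]; exact M.wedge_le_left y x

lemma le_wedge {z x y : A} (h1 : M.le z x) (h2 : M.le z y) : M.le z (M.wedge x y) := by
  apply M.star_le_star'
  rw [show M.star (M.wedge x y) = M.vee (M.star x) (M.star y) from M.star_star _]
  exact M.vee_le (M.star_le_star h1) (M.star_le_star h2)

lemma oplus_star_aux (x y : A) :
    M.oplus (M.star x) (M.star (M.oplus (M.star x) y)) =
      M.oplus (M.star (M.oplus x (M.star y))) (M.star y) := by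
  have h := M.luk (M.star x) (M.star y)
  rw [M.star_star, M.star_star] at h
  calc M.oplus (M.star x) (M.star (M.oplus (M.star x) y))
      = M.oplus (M.star (M.oplus y (M.star x))) (M.star x) := by
        rw [M.oplus_comm (M.star x) y, M.oplus_comm]
    _ = M.oplus (M.star (M.oplus x (M.star y))) (M.star y) := h.symm

lemma wedge_eq_sub_sub (x y : A) : M.wedge x y = M.sub x (M.sub x y) := by
  rw [M.wedge_unfold]
  simp only [MVAlg.sub]
  exact congrArg M.star (M.oplus_star_aux x y).symm

lemma lemma_N (x y : A) :
    M.oplus (M.wedge x y) (M.star y) = M.oplus x (M.star y) := by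
  have h := M.luk (M.oplus x (M.star y)) (M.star y)
  rw [M.star_star] at h
  have hone : M.oplus y (M.oplus x (M.star y)) = M.one := by
    rw [M.oplus_comm x (M.star y), ← M.oplus_assoc, M.oplus_star_self, M.one_oplus]
  rw [hone, M.star_one, M.zero_oplus] at h
  rw [M.wedge_unfold]
  exact h

lemma lemma_M (x y : A) : M.oplus (M.wedge x y) (M.sub x y) = x := by
  rw [M.wedge_eq_sub_sub]
  have : M.oplus (M.sub x (M.sub x y)) (M.sub x y) = M.vee x (M.sub x y) := rfl
  rw [this, M.vee_comm]
  exact M.vee_eq_of_le (M.sub_le_self x y)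

lemma lemma_S (x y : A) :
    M.oplus (M.oplus (M.star y) x) (M.sub x y) = M.oplus (M.star y) x := by
  calc M.oplus (M.oplus (M.star y) x) (M.sub x y)
      = M.oplus (M.oplus x (M.star y)) (M.sub x y) := by rw [M.oplus_comm (M.star y) x]
    _ = M.oplus (M.oplus (M.wedge x y) (M.star y)) (M.sub x y) := by rw [M.lemma_N]
    _ = M.oplus (M.oplus (M.wedge x y) (M.sub x y)) (M.star y) := by
        rw [M.oplus_assoc, M.oplus_comm (M.star y) (M.sub x y), ← M.oplus_assoc]
    _ = M.oplus x (M.star y) := by rw [M.lemma_M]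
    _ = M.oplus (M.star y) x := M.oplus_comm _ _

lemma sub_sub_self (x y : A) : M.sub (M.sub x y) (M.sub y x) = M.sub x y := by
  show M.star (M.oplus (M.star (M.sub x y)) (M.sub y x)) = M.sub x y
  rw [M.star_sub]
  rw [M.lemma_S y x]
  rfl

lemma prelinear (x y : A) : M.wedge (M.sub x y) (M.sub y x) = M.zero := by
  rw [M.wedge_eq_sub_sub, M.sub_sub_self, M.sub_self]

lemma oplus_wedge (x y z : A) :
    M.oplus x (M.wedge y z) = M.wedge (M.oplus x y) (M.oplus x z) := by
  apply M.le_antisymm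
  · exact M.le_wedge (M.oplus_le_oplus_left x (M.wedge_le_left y z))
      (M.oplus_le_oplus_left x (M.wedge_le_right y z))
  · set w := M.wedge (M.oplus x y) (M.oplus x z) with hw
    have h1 : M.le (M.sub w x) y := M.sub_le_iff.2 (M.wedge_le_left _ _)
    have h2 : M.le (M.sub w x) z := M.sub_le_iff.2 (M.wedge_le_right _ _)
    exact M.le_trans (M.le_oplus_sub w x) (M.oplus_le_oplus_left x (M.le_wedge h1 h2))

lemma wedge_le_wedge_right {x y : A} (c : A) (h : M.le x y) :
    M.le (M.wedge x c) (M.wedge y c) :=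
  M.le_wedge (M.le_trans (M.wedge_le_left x c) h) (M.wedge_le_right x c)

lemma sub_oplus_self_le (x y : A) : M.le (M.sub (M.oplus x y) x) y :=
  M.sub_le_iff.2 (M.le_refl _)

lemma wedge_oplus_le (v x y : A) :
    M.le (M.wedge v (M.oplus x y)) (M.oplus (M.wedge v x) (M.wedge v y)) := by
  set w := M.wedge v (M.oplus x y) with hwdef
  have key : M.le w (M.oplus (M.sub w x) (M.wedge w x)) := by
    rw [M.oplus_wedge (M.sub w x) w x]
    refine M.le_wedge (M.le_oplus_right w _) ?_
    rw [M.oplus_comm (M.sub w x) x]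
    exact M.le_oplus_sub w x
  have b1 : M.le (M.wedge w x) (M.wedge v x) :=
    M.wedge_le_wedge_right x (M.wedge_le_left v _)
  have b2 : M.le (M.sub w x) (M.wedge v y) := by
    refine M.le_wedge (M.le_trans (M.sub_le_self w x) (M.wedge_le_left v _)) ?_
    exact M.le_trans (M.sub_le_sub_right x (M.wedge_le_right v (M.oplus x y)))
      (M.sub_oplus_self_le x y)
  have := M.le_trans key (M.oplus_le_oplus b2 b1)
  rwa [M.oplus_comm (M.wedge v y) (M.wedge v x)] at this

lemma odot_eq_sub_star (x y : A) : M.odot x y = M.sub x (M.star y) := by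
  rw [M.sub_eq_odot_star, M.star_star]

lemma sub_oplus_cancel (u c : A) : M.sub (M.oplus u c) c = M.wedge u (M.star c) := by
  rw [M.wedge_eq u (M.star c), M.star_star, ← M.sub_eq_odot_star]

lemma wedge_eq_of_le {x y : A} (h : M.le x y) : M.wedge x y = x :=
  M.le_antisymm (M.wedge_le_left x y) (M.le_wedge (M.le_refl x) h)

lemma sub_oplus_cancel_of_le {u c : A} (h : M.le u (M.star c)) :
    M.sub (M.oplus u c) c = u := by
  rw [M.sub_oplus_cancel, M.wedge_eq_of_le h]

lemma cancel_of_le {c s t : A} (h : M.oplus c s = M.oplus c t)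
    (hs : M.le s (M.star c)) (ht : M.le t (M.star c)) : s = t := by
  have : M.sub (M.oplus s c) c = M.sub (M.oplus t c) c := by
    rw [M.oplus_comm s c, M.oplus_comm t c, h]
  rwa [M.sub_oplus_cancel_of_le hs, M.sub_oplus_cancel_of_le ht] at this

lemma cancel_odot {c s t : A} (h : M.odot c s = M.odot c t)
    (hs : M.le (M.star c) s) (ht : M.le (M.star c) t) : s = t := by
  have h' : M.oplus (M.star c) (M.star s) = M.oplus (M.star c) (M.star t) := by
    rw [← M.star_odot, ← M.star_odot, h]
  have := M.cancel_of_le h' (M.star_le_star hs) (M.star_le_star ht)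
  exact M.star_inj this

lemma star_oplus_eq_sub (x y : A) : M.star (M.oplus x y) = M.sub (M.star x) y := by
  simp only [MVAlg.sub]; rw [M.star_star]

lemma regroup_core {b u w : A} (hu : M.le b u) (hw : M.le b w) :
    M.oplus (M.sub u b) w = M.oplus u (M.sub w b) := by
  conv_lhs => rw [← M.sub_oplus_of_le hw]
  rw [← M.oplus_assoc, M.oplus_comm (M.sub u b) (M.sub w b), M.oplus_assoc,
    M.sub_oplus_of_le hu, M.oplus_comm (M.sub w b) u]

lemma R2 {x y z : A} (h1 : M.le x (M.star y)) (h2 : M.le y (M.star z)) :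
    M.odot (M.oplus x y) z = M.odot x (M.oplus y z) := by
  apply M.star_inj
  rw [M.star_odot, M.star_odot]
  rw [M.star_oplus_eq_sub x y, M.oplus_comm y z, M.star_oplus_eq_sub z y]
  have hb1 : M.le y (M.star x) := by
    have := M.star_le_star h1; rwa [M.star_star] at this
  exact M.regroup_core hb1 h2

lemma R3 {x y z : A} (h1 : M.le x (M.star y)) (h2 : M.le (M.star z) y)
    (h3 : M.le x (M.star (M.odot y z))) :
    M.odot (M.oplus x y) z = M.oplus x (M.odot y z) := by
  have hyz : M.le (M.star y) z := by
    have := M.star_le_star h2; rwa [M.star_star] at this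
  refine M.cancel_of_le (c := M.star z) ?_ ?_ ?_
  · have lhs : M.oplus (M.star z) (M.odot (M.oplus x y) z) = M.oplus x y := by
      rw [M.oplus_comm, M.odot_eq_sub_star]
      have : M.oplus (M.sub (M.oplus x y) (M.star z)) (M.star z)
          = M.vee (M.oplus x y) (M.star z) := rfl
      rw [this, M.vee_comm]
      exact M.vee_eq_of_le (M.le_trans h2 (M.le_oplus_right y x))
    have rhs : M.oplus (M.star z) (M.oplus x (M.odot y z)) = M.oplus x y := by
      rw [M.oplus_comm (M.star z), M.oplus_assoc]
      have e1 : M.oplus (M.odot y z) (M.star z) = M.vee y (M.star z) := by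
        rw [M.odot_eq_sub_star]; rfl
      rw [e1, M.vee_comm, M.vee_eq_of_le h2]
    rw [lhs, rhs]
  · rw [M.star_star]; exact M.odot_le_right _ _
  · rw [M.star_star]
    have step : M.le (M.oplus x (M.odot y z)) (M.oplus (M.star y) (M.odot y z)) :=
      M.oplus_le_oplus_right _ h1
    have e2 : M.oplus (M.star y) (M.odot y z) = z := by
      rw [M.oplus_comm, M.odot_comm, M.odot_eq_sub_star]
      have : M.oplus (M.sub z (M.star y)) (M.star y) = M.vee z (M.star y) := rfl
      rw [this, M.vee_comm]
      exact M.vee_eq_of_le hyz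
    rw [e2] at step; exact step

lemma R6 {x y z : A} (h1 : M.le (M.star y) x) (h2 : M.le y (M.star z)) :
    M.oplus (M.odot x y) z = M.odot x (M.oplus y z) := by
  have h1' : M.le (M.star x) (M.star (M.star y)) := M.star_le_star h1
  have h2' : M.le (M.star (M.star z)) (M.star y) := M.star_le_star h2
  have h3' : M.le (M.star x) (M.star (M.odot (M.star y) (M.star z))) := by
    rw [M.star_odot, M.star_star, M.star_star]
    rw [M.star_star] at h1'
    exact M.le_trans h1' (M.le_oplus_left y z)
  have hR3 := M.R3 h1' h2' h3'
  apply M.star_inj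
  rw [M.star_oplus, M.star_odot, M.star_odot, M.star_oplus]
  exact hR3

lemma R5 {x y z : A} (h1 : M.le (M.star y) x) (h2 : M.le (M.star z) y)
    (h3 : M.le (M.odot x y) (M.star z)) :
    M.oplus (M.odot x y) z = M.oplus x (M.odot y z) := by
  have hz : M.le z (M.star (M.odot x y)) := by
    have := M.star_le_star h3; rwa [M.star_star] at this
  have hx' : M.le (M.star x) y := by
    have := M.star_le_star h1; rwa [M.star_star] at this
  have hodot0 : M.odot (M.odot x y) z = M.zero := M.odot_eq_zero_iff.2 h3
  have hx2 : M.le x (M.star (M.odot y z)) := by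
    refine M.odot_eq_zero_iff.1 ?_
    rw [← M.odot_assoc]; exact hodot0
  refine M.cancel_odot (c := y) ?_ ?_ ?_
  · have e1 : M.oplus (M.odot y z) (M.odot x y) = M.odot y (M.oplus z (M.odot x y)) :=
      M.R6 h2 hz
    have e2 : M.oplus (M.odot y x) (M.odot y z) = M.odot y (M.oplus x (M.odot y z)) :=
      M.R6 hx' hx2
    rw [M.oplus_comm (M.odot x y) z]
    rw [← e1, ← e2, M.odot_comm y x, M.oplus_comm (M.odot y z) (M.odot x y)]
  · have hy'z : M.le (M.star y) z := by
      have := M.star_le_star h2; rwa [M.star_star] at this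
    exact M.le_trans hy'z (M.le_oplus_right z _)
  · exact M.le_trans h1 (M.le_oplus_left x _)

lemma nsmul_add' (m n : ℕ) (x : A) :
    M.nsmul (m + n) x = M.oplus (M.nsmul m x) (M.nsmul n x) := by
  induction m with
  | zero => simp only [Nat.zero_add]; exact (M.zero_oplus _).symm
  | succ k ih =>
      have : k + 1 + n = (k + n) + 1 := by omega
      rw [this]
      show M.oplus x (M.nsmul (k + n) x) = M.oplus (M.oplus x (M.nsmul k x)) (M.nsmul n x)
      rw [ih, ← M.oplus_assoc]

lemma wedge_zero (v : A) : M.wedge v M.zero = M.zero :=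
  M.le_zero_iff.1 (M.wedge_le_right v M.zero)

lemma wedge_one (v : A) : M.wedge v M.one = v := M.wedge_eq_of_le (M.le_top v)

lemma wedge_nsmul_zero {v x : A} (h : M.wedge v x = M.zero) (n : ℕ) :
    M.wedge v (M.nsmul n x) = M.zero := by
  induction n with
  | zero => exact M.wedge_zero v
  | succ k ih =>
      refine M.le_zero_iff.1 ?_
      have := M.wedge_oplus_le v x (M.nsmul k x)
      rw [h, ih, M.oplus_zero] at this
      exact this

end Lattice

end MVAlg
namespace MVAlg

variable {A : Type u}

section Quotient

variable (M : MVAlg A)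

lemma oplus_oplus_oplus_comm (a b c d : A) :
    M.oplus (M.oplus a b) (M.oplus c d) = M.oplus (M.oplus a c) (M.oplus b d) := by
  rw [M.oplus_assoc, M.oplus_assoc]
  congr 1
  rw [← M.oplus_assoc, ← M.oplus_assoc, M.oplus_comm b c]

lemma sub_triangle (x y z : A) :
    M.le (M.sub x z) (M.oplus (M.sub x y) (M.sub y z)) := by
  refine M.sub_le_iff.2 ?_
  have h1 : M.le x (M.oplus y (M.sub x y)) := M.le_oplus_sub x y
  have h2 : M.le (M.oplus y (M.sub x y)) (M.oplus (M.oplus z (M.sub y z)) (M.sub x y)) :=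
    M.oplus_le_oplus_right _ (M.le_oplus_sub y z)
  have h3 := M.le_trans h1 h2
  have e : M.oplus (M.oplus z (M.sub y z)) (M.sub x y)
      = M.oplus z (M.oplus (M.sub x y) (M.sub y z)) := by
    rw [M.oplus_assoc, M.oplus_comm (M.sub y z) (M.sub x y)]
  rwa [e] at h3

lemma sub_oplus_le_oplus_subs (x y x' y' : A) :
    M.le (M.sub (M.oplus x y) (M.oplus x' y')) (M.oplus (M.sub x x') (M.sub y y')) := by
  refine M.sub_le_iff.2 ?_
  have h := M.oplus_le_oplus (M.le_oplus_sub x x') (M.le_oplus_sub y y')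
  have e : M.oplus (M.oplus x' (M.sub x x')) (M.oplus y' (M.sub y y'))
      = M.oplus (M.oplus x' y') (M.oplus (M.sub x x') (M.sub y y')) :=
    M.oplus_oplus_oplus_comm _ _ _ _
  rwa [e] at h

lemma sub_star_star (x y : A) : M.sub (M.star x) (M.star y) = M.sub y x := by
  simp only [MVAlg.sub]; rw [M.star_star, M.oplus_comm]

variable {I : Set A} (hI : M.IsIdeal I)

/-- the congruence associated to an ideal -/
def idealSetoid : Setoid A where
  r x y := M.sub x y ∈ I ∧ M.sub y x ∈ I
  iseqv := by
    constructor
    · intro x; constructor <;> (rw [M.sub_self]; exact hI.1)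
    · rintro x y ⟨h1, h2⟩; exact ⟨h2, h1⟩
    · rintro x y z ⟨h1, h2⟩ ⟨h3, h4⟩
      constructor
      · exact hI.2.2 _ _ (M.sub_triangle x y z) (hI.2.1 _ h1 _ h3)
      · exact hI.2.2 _ _ (M.sub_triangle z y x) (hI.2.1 _ h4 _ h2)

/-- quotient MV-algebra -/
def quotAlg : MVAlg (Quotient (M.idealSetoid hI)) where
  oplus := Quotient.map₂ M.oplus (by
    rintro x x' ⟨hx1, hx2⟩ y y' ⟨hy1, hy2⟩
    constructor
    · exact hI.2.2 _ _ (M.sub_oplus_le_oplus_subs x y x' y') (hI.2.1 _ hx1 _ hy1)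
    · exact hI.2.2 _ _ (M.sub_oplus_le_oplus_subs x' y' x y) (hI.2.1 _ hx2 _ hy2))
  star := Quotient.map M.star (by
    rintro x y ⟨h1, h2⟩
    exact ⟨by rw [M.sub_star_star]; exact h2, by rw [M.sub_star_star]; exact h1⟩)
  zero := Quotient.mk _ M.zero
  oplus_comm := by
    rintro ⟨x⟩ ⟨y⟩; exact congrArg (Quotient.mk _) (M.oplus_comm x y)
  oplus_assoc := by
    rintro ⟨x⟩ ⟨y⟩ ⟨z⟩; exact congrArg (Quotient.mk _) (M.oplus_assoc x y z)
  oplus_zero := by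
    rintro ⟨x⟩; exact congrArg (Quotient.mk _) (M.oplus_zero x)
  star_star := by
    rintro ⟨x⟩; exact congrArg (Quotient.mk _) (M.star_star x)
  oplus_one := by
    rintro ⟨x⟩; exact congrArg (Quotient.mk _) (M.oplus_one x)
  luk := by
    rintro ⟨x⟩ ⟨y⟩; exact congrArg (Quotient.mk _) (M.luk x y)

lemma quot_mk_oplus (x y : A) :
    (M.quotAlg hI).oplus (Quotient.mk _ x) (Quotient.mk _ y) = Quotient.mk _ (M.oplus x y) :=
  rfl

lemma quot_mk_star (x : A) :
    (M.quotAlg hI).star (Quotient.mk _ x) = Quotient.mk _ (M.star x) := rfl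

lemma quot_mk_zero : (M.quotAlg hI).zero = Quotient.mk _ M.zero := rfl

lemma quot_mk_one : (M.quotAlg hI).one = Quotient.mk _ M.one := rfl

lemma quot_hom : MVHom M (M.quotAlg hI) (Quotient.mk _) :=
  ⟨fun _ _ => rfl, fun _ => rfl, rfl⟩

lemma quot_mk_eq_zero_iff {x : A} :
    Quotient.mk (M.idealSetoid hI) x = (M.quotAlg hI).zero ↔ x ∈ I := by
  rw [quot_mk_zero, Quotient.eq]
  show M.sub x M.zero ∈ I ∧ M.sub M.zero x ∈ I ↔ x ∈ I
  rw [M.sub_zero', M.zero_sub']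
  exact ⟨fun h => h.1, fun h => ⟨h, hI.1⟩⟩

lemma quot_le_iff {x y : A} :
    (M.quotAlg hI).le (Quotient.mk _ x) (Quotient.mk _ y) ↔ M.sub x y ∈ I := by
  show (M.quotAlg hI).oplus ((M.quotAlg hI).star _) _ = _ ↔ _
  rw [quot_mk_star, quot_mk_oplus, quot_mk_one, Quotient.eq]
  show M.sub (M.oplus (M.star x) y) M.one ∈ I ∧ M.sub M.one (M.oplus (M.star x) y) ∈ I ↔ _
  constructor
  · rintro ⟨-, h⟩
    have e : M.sub M.one (M.oplus (M.star x) y) = M.sub x y := by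
      simp only [MVAlg.sub]
      rw [M.star_one, M.zero_oplus]
    rwa [e] at h
  · intro h
    constructor
    · have : M.sub (M.oplus (M.star x) y) M.one = M.zero :=
        M.le_iff_sub_eq_zero.1 (M.le_top _)
      rw [this]; exact hI.1
    · have e : M.sub M.one (M.oplus (M.star x) y) = M.sub x y := by
        simp only [MVAlg.sub]
        rw [M.star_one, M.zero_oplus]
      rwa [e]

lemma quot_mk_nsmul (n : ℕ) (x : A) :
    (M.quotAlg hI).nsmul n (Quotient.mk _ x) = Quotient.mk _ (M.nsmul n x) := by
  induction n with
  | zero => rfl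
  | succ k ih =>
      show (M.quotAlg hI).oplus _ ((M.quotAlg hI).nsmul k _) = _
      rw [ih, quot_mk_oplus]
      rfl

lemma quot_zero_ne_one (hmax : M.IsMaximalIdeal I) : (M.quotAlg hI).zero ≠ (M.quotAlg hI).one := by
  intro h
  apply hmax.2.1
  have hone : M.one ∈ I := by
    rw [← M.quot_mk_eq_zero_iff hI, ← quot_mk_one]
    exact h.symm
  ext w
  simp only [Set.mem_univ, iff_true]
  exact hI.2.2 _ _ (M.le_top w) hone

lemma quot_simple (hmax : M.IsMaximalIdeal I) (a : Quotient (M.idealSetoid hI)) (ha : a ≠ (M.quotAlg hI).zero) :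
    ∃ n, (M.quotAlg hI).nsmul n a = (M.quotAlg hI).one := by
  obtain ⟨x, rfl⟩ := Quotient.exists_rep a
  have hx : x ∉ I := fun h => ha ((M.quot_mk_eq_zero_iff hI).2 h)
  set J : Set A := {w | ∃ n, ∃ i ∈ I, M.le w (M.oplus i (M.nsmul n x))} with hJ
  have hJideal : M.IsIdeal J := by
    refine ⟨⟨0, M.zero, hI.1, M.bot_le _⟩, ?_, ?_⟩
    · rintro w ⟨n, i, hi, hwi⟩ w' ⟨m, i', hi', hwi'⟩
      refine ⟨n + m, M.oplus i i', hI.2.1 _ hi _ hi', ?_⟩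
      have h := M.oplus_le_oplus hwi hwi'
      rwa [M.oplus_oplus_oplus_comm, ← M.nsmul_add'] at h
    · rintro w w' hle ⟨n, i, hi, hw⟩
      exact ⟨n, i, hi, M.le_trans hle hw⟩
  have hIJ : I ⊆ J := fun i hi => ⟨0, i, hi, by
    show M.le i (M.oplus i M.zero)
    rw [M.oplus_zero]; exact M.le_refl i⟩
  have hxJ : x ∈ J := ⟨1, M.zero, hI.1, by
    show M.le x (M.oplus M.zero (M.nsmul 1 x))
    rw [M.zero_oplus]
    show M.le x (M.oplus x M.zero)
    rw [M.oplus_zero]; exact M.le_refl x⟩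
  have hJuniv : J = Set.univ := by
    by_contra hne
    have := hmax.2.2 J hJideal hne hIJ
    exact hx (this ▸ hxJ)
  have hone : M.one ∈ J := hJuniv ▸ Set.mem_univ _
  obtain ⟨n, i, hi, h1⟩ := hone
  have heq : M.oplus i (M.nsmul n x) = M.one := M.one_le_iff.1 h1
  refine ⟨n, ?_⟩
  rw [M.quot_mk_nsmul hI]
  apply (M.quotAlg hI).le_antisymm ((M.quotAlg hI).le_top _)
  rw [quot_mk_one]
  rw [M.quot_le_iff hI]
  have hsl : M.le (M.sub M.one (M.nsmul n x)) i := by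
    refine M.sub_le_iff.2 ?_
    rw [M.one_le_iff, M.oplus_comm, heq]
  exact hI.2.2 _ _ hsl hi

lemma quot_linear (hmax : M.IsMaximalIdeal I) (a b : Quotient (M.idealSetoid hI)) :
    (M.quotAlg hI).le a b ∨ (M.quotAlg hI).le b a := by
  set Q := M.quotAlg hI
  by_cases hp : Q.sub a b = Q.zero
  · exact Or.inl (Q.le_iff_sub_eq_zero.2 hp)
  · right
    obtain ⟨n, hn⟩ := M.quot_simple hI hmax _ hp
    have hw : Q.wedge (Q.sub b a) (Q.sub a b) = Q.zero := by
      rw [Q.wedge_comm]; exact Q.prelinear a b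
    have : Q.wedge (Q.sub b a) (Q.nsmul n (Q.sub a b)) = Q.zero :=
      Q.wedge_nsmul_zero hw n
    rw [hn, Q.wedge_one] at this
    exact Q.le_iff_sub_eq_zero.2 this

end Quotient

end MVAlg
namespace MVAlg

section Group

variable {A : Type u} (M : MVAlg A)

open scoped Classical

/-- carrier of the enveloping group of an MV-chain -/
def GC : Type u := ℤ × {x : A // x ≠ M.one}

variable {M}

lemma le_star_flip {x y : A} (h : M.le x (M.star y)) : M.le y (M.star x) := by
  have := M.star_le_star h; rwa [M.star_star] at this

lemma star_le_flip {x y : A} (h : M.le (M.star x) y) : M.le (M.star y) x := by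
  have := M.star_le_star h; rwa [M.star_star] at this

/-- addition with carry -/
noncomputable def gadd (a b : GC M) : GC M :=
  if h : M.le (M.star a.2.1) b.2.1 then
    (a.1 + b.1 + 1, ⟨M.odot a.2.1 b.2.1, fun hc => a.2.2 (M.odot_eq_one hc)⟩)
  else
    (a.1 + b.1, ⟨M.oplus a.2.1 b.2.1, fun hc => h (M.oplus_eq_one_iff.1 hc)⟩)

lemma gc_ext {a b : GC M} (h1 : a.1 = b.1) (h2 : a.2.1 = b.2.1) : a = b :=
  Prod.ext h1 (Subtype.ext h2)

lemma gadd_fst_pos {a b : GC M} (h : M.le (M.star a.2.1) b.2.1) :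
    (gadd a b).1 = a.1 + b.1 + 1 := by simp [gadd, h]

lemma gadd_snd_pos {a b : GC M} (h : M.le (M.star a.2.1) b.2.1) :
    (gadd a b).2.1 = M.odot a.2.1 b.2.1 := by simp [gadd, h]

lemma gadd_fst_neg {a b : GC M} (h : ¬ M.le (M.star a.2.1) b.2.1) :
    (gadd a b).1 = a.1 + b.1 := by simp [gadd, h]

lemma gadd_snd_neg {a b : GC M} (h : ¬ M.le (M.star a.2.1) b.2.1) :
    (gadd a b).2.1 = M.oplus a.2.1 b.2.1 := by simp [gadd, h]

/-- key: vee-collapse helper -/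
lemma oplus_odot_star_collapse {x y : A} (h : M.le (M.star y) x) :
    M.oplus (M.odot x y) (M.star y) = x := by
  rw [M.odot_eq_sub_star]
  have : M.oplus (M.sub x (M.star y)) (M.star y) = M.vee x (M.star y) := rfl
  rw [this, M.vee_comm]
  exact M.vee_eq_of_le h

lemma gadd_assoc (lin : ∀ x y : A, M.le x y ∨ M.le y x) (a b c : GC M) :
    gadd (gadd a b) c = gadd a (gadd b c) := by
  obtain ⟨m, x, hx⟩ := a
  obtain ⟨n, y, hy⟩ := b
  obtain ⟨k, z, hz⟩ := c
  set a : GC M := (m, ⟨x, hx⟩) with ha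
  set b : GC M := (n, ⟨y, hy⟩) with hb
  set c : GC M := (k, ⟨z, hz⟩) with hc
  have hax : a.2.1 = x := rfl
  have hby : b.2.1 = y := rfl
  have hcz : c.2.1 = z := rfl
  by_cases h1 : M.le (M.star x) y
  · by_cases h3 : M.le (M.star y) z
    · have flip1 : M.le (M.star y) x := star_le_flip h1
      have flip3 : M.le (M.star z) y := star_le_flip h3
      by_cases h2 : M.le (M.star (M.odot x y)) z
      · have h2' : M.le (M.star ((gadd a b).2.1)) c.2.1 := by
          rw [gadd_snd_pos h1]; exact h2
        have h4 : M.le (M.star x) (M.odot y z) := by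
          have hzxy : M.le (M.star z) (M.odot x y) := star_le_flip h2
          have key : M.le (M.oplus (M.star y) (M.star z)) x := by
            have step := M.oplus_le_oplus_left (M.star y) hzxy
            have e : M.oplus (M.star y) (M.odot x y) = x := by
              rw [M.oplus_comm]; exact oplus_odot_star_collapse flip1
            rwa [e] at step
          rw [← M.star_odot] at key
          exact star_le_flip key
        have h4' : M.le (M.star a.2.1) ((gadd b c).2.1) := by
          rw [gadd_snd_pos h3]; exact h4
        refine gc_ext ?_ ?_
        · rw [gadd_fst_pos h2', gadd_fst_pos h1, gadd_fst_pos h4', gadd_fst_pos h3]; omega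
        · rw [gadd_snd_pos h2', gadd_snd_pos h1, gadd_snd_pos h4', gadd_snd_pos h3]
          exact M.odot_assoc x y z
      · have h2' : ¬ M.le (M.star ((gadd a b).2.1)) c.2.1 := by
          rw [gadd_snd_pos h1]; exact h2
        have h4 : ¬ M.le (M.star x) (M.odot y z) := by
          intro hcon
          apply h2
          have step := M.oplus_le_oplus_right (M.star y) hcon
          have e : M.oplus (M.odot y z) (M.star y) = z := by
            rw [M.odot_comm]; exact oplus_odot_star_collapse h3
          rw [e] at step
          rw [M.star_odot]
          exact step
        have h4' : ¬ M.le (M.star a.2.1) ((gadd b c).2.1) := by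
          rw [gadd_snd_pos h3]; exact h4
        refine gc_ext ?_ ?_
        · rw [gadd_fst_neg h2', gadd_fst_pos h1, gadd_fst_neg h4', gadd_fst_pos h3]; omega
        · rw [gadd_snd_neg h2', gadd_snd_pos h1, gadd_snd_neg h4', gadd_snd_pos h3]
          have hxy_z : M.le (M.odot x y) (M.star z) :=
            le_star_flip ((lin _ _).resolve_left h2)
          exact M.R5 flip1 flip3 hxy_z
    · have flip1 : M.le (M.star y) x := star_le_flip h1
      have hyz : M.le y (M.star z) := le_star_flip ((lin _ _).resolve_left h3)
      have h2 : ¬ M.le (M.star (M.odot x y)) z := by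
        intro hcon
        exact h3 (M.le_trans (M.star_le_star (M.odot_le_right x y)) hcon)
      have h2' : ¬ M.le (M.star ((gadd a b).2.1)) c.2.1 := by
        rw [gadd_snd_pos h1]; exact h2
      have h4 : M.le (M.star x) (M.oplus y z) := M.le_trans h1 (M.le_oplus_left y z)
      have h4' : M.le (M.star a.2.1) ((gadd b c).2.1) := by
        rw [gadd_snd_neg h3]; exact h4
      refine gc_ext ?_ ?_
      · rw [gadd_fst_neg h2', gadd_fst_pos h1, gadd_fst_pos h4', gadd_fst_neg h3]; omega
      · rw [gadd_snd_neg h2', gadd_snd_pos h1, gadd_snd_pos h4', gadd_snd_neg h3]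
        exact M.R6 flip1 hyz
  · have hxy : M.le x (M.star y) := le_star_flip ((lin _ _).resolve_left h1)
    by_cases h3 : M.le (M.star y) z
    · have flip3 : M.le (M.star z) y := star_le_flip h3
      have h2 : M.le (M.star (M.oplus x y)) z := by
        have : M.le (M.star z) (M.oplus x y) := M.le_trans flip3 (M.le_oplus_right y x)
        exact star_le_flip this
      have h2' : M.le (M.star ((gadd a b).2.1)) c.2.1 := by
        rw [gadd_snd_neg h1]; exact h2
      have h4 : ¬ M.le (M.star x) (M.odot y z) := by
        intro hcon
        exact h1 (M.le_trans hcon (M.odot_le_left y z))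
      have h4' : ¬ M.le (M.star a.2.1) ((gadd b c).2.1) := by
        rw [gadd_snd_pos h3]; exact h4
      refine gc_ext ?_ ?_
      · rw [gadd_fst_pos h2', gadd_fst_neg h1, gadd_fst_neg h4', gadd_fst_pos h3]; omega
      · rw [gadd_snd_pos h2', gadd_snd_neg h1, gadd_snd_neg h4', gadd_snd_pos h3]
        have h3' : M.le x (M.star (M.odot y z)) := le_star_flip ((lin _ _).resolve_left h4)
        exact M.R3 hxy flip3 h3'
    · have hyz : M.le y (M.star z) := le_star_flip ((lin _ _).resolve_left h3)
      have hshift : M.le (M.star (M.oplus x y)) z ↔ M.le (M.star x) (M.oplus y z) := by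
        rw [M.star_oplus]
        have := M.odot_le_iff (x := M.star x) (y := M.star y) (z := z)
        rwa [M.star_star] at this
      by_cases h2 : M.le (M.star (M.oplus x y)) z
      · have h2' : M.le (M.star ((gadd a b).2.1)) c.2.1 := by
          rw [gadd_snd_neg h1]; exact h2
        have h4 : M.le (M.star x) (M.oplus y z) := hshift.1 h2
        have h4' : M.le (M.star a.2.1) ((gadd b c).2.1) := by
          rw [gadd_snd_neg h3]; exact h4
        refine gc_ext ?_ ?_
        · rw [gadd_fst_pos h2', gadd_fst_neg h1, gadd_fst_pos h4', gadd_fst_neg h3]; omega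
        · rw [gadd_snd_pos h2', gadd_snd_neg h1, gadd_snd_pos h4', gadd_snd_neg h3]
          exact M.R2 hxy hyz
      · have h2' : ¬ M.le (M.star ((gadd a b).2.1)) c.2.1 := by
          rw [gadd_snd_neg h1]; exact h2
        have h4 : ¬ M.le (M.star x) (M.oplus y z) := fun hc => h2 (hshift.2 hc)
        have h4' : ¬ M.le (M.star a.2.1) ((gadd b c).2.1) := by
          rw [gadd_snd_neg h3]; exact h4
        refine gc_ext ?_ ?_
        · rw [gadd_fst_neg h2', gadd_fst_neg h1, gadd_fst_neg h4', gadd_fst_neg h3]; omega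
        · rw [gadd_snd_neg h2', gadd_snd_neg h1, gadd_snd_neg h4', gadd_snd_neg h3]
          exact M.oplus_assoc x y z

lemma ov_flip {x y : A} (h : M.le (M.star x) y) : M.le (M.star y) x := star_le_flip h

lemma gadd_comm (a b : GC M) : gadd a b = gadd b a := by
  by_cases h : M.le (M.star a.2.1) b.2.1
  · refine gc_ext ?_ ?_
    · rw [gadd_fst_pos h, gadd_fst_pos (ov_flip h)]; omega
    · rw [gadd_snd_pos h, gadd_snd_pos (ov_flip h)]; exact M.odot_comm _ _
  · have h' : ¬ M.le (M.star b.2.1) a.2.1 := fun hc => h (ov_flip hc)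
    refine gc_ext ?_ ?_
    · rw [gadd_fst_neg h, gadd_fst_neg h']; omega
    · rw [gadd_snd_neg h, gadd_snd_neg h']; exact M.oplus_comm _ _

section withNT

variable (hnt : M.zero ≠ M.one)

/-- group zero -/
def gzero : GC M := (0, ⟨M.zero, hnt⟩)

/-- group negation -/
noncomputable def gneg (a : GC M) : GC M :=
  if h : a.2.1 = M.zero then (-a.1, ⟨M.zero, hnt⟩)
  else (-a.1 - 1, ⟨M.star a.2.1,
    fun hc => h (M.star_inj (show M.star a.2.1 = M.star M.zero from hc))⟩)

lemma not_ov_zero_left {x : A} (hx : x ≠ M.one) : ¬ M.le (M.star M.zero) x :=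
  fun h => hx (M.one_le_iff.1 h)

lemma gzero_gadd (a : GC M) : gadd (gzero hnt) a = a := by
  have h : ¬ M.le (M.star ((gzero (M := M) hnt).2.1)) a.2.1 := not_ov_zero_left a.2.2
  refine gc_ext ?_ ?_
  · rw [gadd_fst_neg h]; show 0 + a.1 = a.1; omega
  · rw [gadd_snd_neg h]; exact M.zero_oplus a.2.1

lemma gadd_gzero (a : GC M) : gadd a (gzero hnt) = a := by
  rw [gadd_comm]; exact gzero_gadd hnt a

lemma gneg_gadd (a : GC M) : gadd (gneg hnt a) a = gzero hnt := by
  by_cases hz : a.2.1 = M.zero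
  · have e : gneg (M := M) hnt a = (-a.1, ⟨M.zero, hnt⟩) := dif_pos hz
    have h : ¬ M.le (M.star ((gneg (M := M) hnt a).2.1)) a.2.1 := by
      rw [e]; exact not_ov_zero_left (hz ▸ a.2.2)
    refine gc_ext ?_ ?_
    · rw [gadd_fst_neg h, e]; show -a.1 + a.1 = 0; omega
    · rw [gadd_snd_neg h, e]
      show M.oplus M.zero a.2.1 = M.zero
      rw [M.zero_oplus, hz]
  · have e : gneg (M := M) hnt a = (-a.1 - 1, ⟨M.star a.2.1, _⟩) := dif_neg hz
    have h : M.le (M.star ((gneg (M := M) hnt a).2.1)) a.2.1 := by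
      rw [e]; show M.le (M.star (M.star a.2.1)) a.2.1
      rw [M.star_star]; exact M.le_refl _
    refine gc_ext ?_ ?_
    · rw [gadd_fst_pos h, e]; show -a.1 - 1 + a.1 + 1 = 0; omega
    · rw [gadd_snd_pos h, e]
      show M.odot (M.star a.2.1) a.2.1 = M.zero
      rw [M.odot_comm]; exact M.odot_star_self _

end withNT

/-- order on the group -/
def gle (a b : GC M) : Prop := a.1 < b.1 ∨ (a.1 = b.1 ∧ M.le a.2.1 b.2.1)

lemma gle_refl (a : GC M) : gle a a := Or.inr ⟨rfl, M.le_refl _⟩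

lemma gle_trans {a b c : GC M} (h1 : gle a b) (h2 : gle b c) : gle a c := by
  rcases h1 with h1 | ⟨e1, l1⟩ <;> rcases h2 with h2 | ⟨e2, l2⟩
  · exact Or.inl (by omega)
  · exact Or.inl (by omega)
  · exact Or.inl (by omega)
  · exact Or.inr ⟨by omega, M.le_trans l1 l2⟩

lemma gle_antisymm {a b : GC M} (h1 : gle a b) (h2 : gle b a) : a = b := by
  rcases h1 with h1 | ⟨e1, l1⟩ <;> rcases h2 with h2 | ⟨e2, l2⟩
  · omega
  · omega
  · omega
  · exact gc_ext e1 (M.le_antisymm l1 l2)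

lemma gle_total (lin : ∀ x y : A, M.le x y ∨ M.le y x) (a b : GC M) :
    gle a b ∨ gle b a := by
  rcases lt_trichotomy a.1 b.1 with h | h | h
  · exact Or.inl (Or.inl h)
  · rcases lin a.2.1 b.2.1 with hl | hl
    · exact Or.inl (Or.inr ⟨h, hl⟩)
    · exact Or.inr (Or.inr ⟨h.symm, hl⟩)
  · exact Or.inr (Or.inl h)

lemma gadd_le_gadd_left {b c : GC M} (h : gle b c) (a : GC M) :
    gle (gadd a b) (gadd a c) := by
  rcases h with hlt | ⟨heq, hle⟩
  · by_cases h1 : M.le (M.star a.2.1) b.2.1 <;> by_cases h2 : M.le (M.star a.2.1) c.2.1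
    · exact Or.inl (by rw [gadd_fst_pos h1, gadd_fst_pos h2]; omega)
    · by_cases h5 : a.1 + b.1 + 1 < a.1 + c.1
      · exact Or.inl (by rw [gadd_fst_pos h1, gadd_fst_neg h2]; omega)
      · refine Or.inr ⟨by rw [gadd_fst_pos h1, gadd_fst_neg h2]; omega, ?_⟩
        rw [gadd_snd_pos h1, gadd_snd_neg h2]
        exact M.le_trans (M.odot_le_left _ _) (M.le_oplus_left _ _)
    · exact Or.inl (by rw [gadd_fst_neg h1, gadd_fst_pos h2]; omega)
    · exact Or.inl (by rw [gadd_fst_neg h1, gadd_fst_neg h2]; omega)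
  · by_cases h1 : M.le (M.star a.2.1) b.2.1
    · have h2 : M.le (M.star a.2.1) c.2.1 := M.le_trans h1 hle
      refine Or.inr ⟨by rw [gadd_fst_pos h1, gadd_fst_pos h2]; omega, ?_⟩
      rw [gadd_snd_pos h1, gadd_snd_pos h2]
      exact M.odot_le_odot_left _ hle
    · by_cases h2 : M.le (M.star a.2.1) c.2.1
      · exact Or.inl (by rw [gadd_fst_neg h1, gadd_fst_pos h2]; omega)
      · refine Or.inr ⟨by rw [gadd_fst_neg h1, gadd_fst_neg h2]; omega, ?_⟩
        rw [gadd_snd_neg h1, gadd_snd_neg h2]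
        exact M.oplus_le_oplus_left _ hle

/-- the additive commutative group structure on `GC M` -/
noncomputable def gAddCommGroup (lin : ∀ x y : A, M.le x y ∨ M.le y x)
    (hnt : M.zero ≠ M.one) : AddCommGroup (GC M) :=
  letI : Add (GC M) := ⟨gadd⟩
  letI : Zero (GC M) := ⟨gzero hnt⟩
  letI : Neg (GC M) := ⟨gneg hnt⟩
  { add := gadd
    zero := gzero hnt
    neg := gneg hnt
    nsmul := nsmulRec
    zsmul := zsmulRec
    add_assoc := gadd_assoc lin
    zero_add := gzero_gadd hnt
    add_zero := gadd_gzero hnt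
    neg_add_cancel := gneg_gadd hnt
    add_comm := gadd_comm }

/-- the linearly ordered abelian group structure on `GC M` -/
noncomputable def gGroup (lin : ∀ x y : A, M.le x y ∨ M.le y x)
    (hnt : M.zero ≠ M.one) : LinearOrder (GC M) :=
  { le := gle
    le_refl := gle_refl
    le_trans := fun _ _ _ => gle_trans
    le_antisymm := fun _ _ => gle_antisymm
    le_total := gle_total lin
    toDecidableLE := fun _ _ => Classical.propDecidable _ }

theorem gIsOrd (lin : ∀ x y : A, M.le x y ∨ M.le y x)
    (hnt : M.zero ≠ M.one) :
    letI := gAddCommGroup lin hnt; letI := gGroup lin hnt; IsOrderedAddMonoid (GC M) :=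
  letI := gAddCommGroup lin hnt; letI := gGroup lin hnt
  { add_le_add_left := fun a b h c => by
      show gle (gadd a c) (gadd b c)
      rw [gadd_comm a c, gadd_comm b c]
      exact gadd_le_gadd_left h c }


/-- constructor for group elements -/
def gmk (m : ℤ) (x : A) (hx : x ≠ M.one) : GC M := (m, ⟨x, hx⟩)

lemma gmk_fst (m : ℤ) (x : A) (hx : x ≠ M.one) : (gmk m x hx : GC M).1 = m := rfl

lemma gmk_snd (m : ℤ) (x : A) (hx : x ≠ M.one) : (gmk m x hx : GC M).2.1 = x := rfl

lemma gadd_pair_pos {m n : ℤ} {x y : A} {hx : x ≠ M.one} {hy : y ≠ M.one}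
    (h : M.le (M.star x) y) :
    gadd (gmk m x hx) (gmk n y hy) =
      gmk (m + n + 1) (M.odot x y) (fun hc => hx (M.odot_eq_one hc)) :=
  gc_ext (gadd_fst_pos h) (gadd_snd_pos h)

lemma gadd_pair_neg {m n : ℤ} {x y : A} {hx : x ≠ M.one} {hy : y ≠ M.one}
    (h : ¬ M.le (M.star x) y) :
    gadd (gmk m x hx) (gmk n y hy) =
      gmk (m + n) (M.oplus x y) (fun hc => h (M.oplus_eq_one_iff.1 hc)) :=
  gc_ext (gadd_fst_neg h) (gadd_snd_neg h)

lemma gmk_ext {m n : ℤ} {x y : A} {hx : x ≠ M.one} {hy : y ≠ M.one}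
    (h1 : m = n) (h2 : x = y) : (gmk m x hx : GC M) = gmk n y hy :=
  gc_ext h1 h2

end Group

end MVAlg
section Holder

variable {G : Type w} [AddCommGroup G] [LinearOrder G] [IsOrderedAddMonoid G] [Archimedean G]

/-- Hölder: a normalized, additive, monotone real-valued map on an archimedean
linearly ordered abelian group. -/
theorem holder_exists {u : G} (hu : 0 < u) :
    ∃ φ : G → ℝ, (∀ a b, φ (a + b) = φ a + φ b) ∧ (∀ a b, a ≤ b → φ a ≤ φ b) ∧
      φ u = 1 ∧ (∀ a, 0 < a → 0 < φ a) := by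
  classical
  set S : G → Set ℝ := fun g => {r | ∃ p q : ℤ, 0 < q ∧ r = p / q ∧ p • u ≤ q • g}
    with hS
  have hmono_u : ∀ {p q : ℤ}, p • u ≤ q • u → p ≤ q := by
    intro p q h
    by_contra hc
    push_neg at hc
    exact absurd h (not_le.2 (zsmul_lt_zsmul_left hu hc))
  have hne : ∀ g : G, (S g).Nonempty := by
    intro g
    obtain ⟨m, hm⟩ := Archimedean.arch (-g) hu
    refine ⟨_, -(m : ℤ), 1, one_pos, rfl, ?_⟩
    rw [one_zsmul, neg_zsmul, natCast_zsmul]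
    exact neg_le.1 hm
  have hbdd : ∀ g : G, BddAbove (S g) := by
    intro g
    obtain ⟨m, hm⟩ := Archimedean.arch g hu
    refine ⟨(m : ℝ), ?_⟩
    rintro r ⟨p, q, hq, rfl, hpu⟩
    have h1 : q • g ≤ q • ((m : ℤ) • u) := by
      rw [natCast_zsmul]
      exact zsmul_le_zsmul_right hq.le hm
    rw [← mul_zsmul] at h1
    have h2 : p ≤ q * (m : ℤ) := hmono_u (le_trans hpu h1)
    rw [div_le_iff₀ (show (0:ℝ) < (q:ℝ) by exact_mod_cast hq)]
    have h3 : ((p : ℤ) : ℝ) ≤ ((q * (m : ℤ) : ℤ) : ℝ) := by exact_mod_cast h2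
    push_cast at h3
    linarith
  set φ : G → ℝ := fun g => sSup (S g) with hphi
  have hmem_le : ∀ {g : G} {r : ℝ}, r ∈ S g → r ≤ φ g := fun h => le_csSup (hbdd _) h
  have hmono : ∀ a b : G, a ≤ b → φ a ≤ φ b := by
    intro a b hab
    refine csSup_le_csSup (hbdd b) (hne a) ?_
    rintro r ⟨p, q, hq, rfl, hpu⟩
    exact ⟨p, q, hq, rfl, le_trans hpu (zsmul_le_zsmul_right hq.le hab)⟩
  have hsum_mem : ∀ {a b : G} {r r' : ℝ}, r ∈ S a → r' ∈ S b → r + r' ∈ S (a + b) := by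
    rintro a b r r' ⟨p, q, hq, rfl, hpu⟩ ⟨p', q', hq', rfl, hpu'⟩
    refine ⟨p * q' + p' * q, q * q', mul_pos hq hq', ?_, ?_⟩
    · have hq0 : (q : ℝ) ≠ 0 := by exact_mod_cast hq.ne'
      have hq0' : (q' : ℝ) ≠ 0 := by exact_mod_cast hq'.ne'
      push_cast
      field_simp
      try ring
    · have e1 : (p * q' + p' * q) • u = q' • (p • u) + q • (p' • u) := by
        rw [add_zsmul, ← mul_zsmul, ← mul_zsmul, mul_comm q' p, mul_comm q p']
      have e2 : (q * q') • (a + b) = q' • (q • a) + q • (q' • b) := by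
        rw [smul_add, ← mul_zsmul, ← mul_zsmul, mul_comm q' q]
      rw [e1, e2]
      exact add_le_add (zsmul_le_zsmul_right hq'.le hpu) (zsmul_le_zsmul_right hq.le hpu')
  have hadd_ge : ∀ a b : G, φ a + φ b ≤ φ (a + b) := by
    intro a b
    have h1 : φ a ≤ φ (a + b) - φ b := by
      refine csSup_le (hne a) ?_
      intro r hr
      rw [le_sub_iff_add_le]
      have h2 : φ b ≤ φ (a + b) - r := by
        refine csSup_le (hne b) ?_
        intro r' hr'
        have := hmem_le (hsum_mem hr hr')
        linarith
      linarith
    linarith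
  have hgreat : ∀ (g : G) (N : ℤ), ∃ j : ℤ, j • u ≤ N • g ∧ ∀ i : ℤ, i • u ≤ N • g → i ≤ j := by
    intro g N
    apply Int.exists_greatest_of_bdd
    · obtain ⟨m, hm⟩ := Archimedean.arch (N • g) hu
      refine ⟨(m : ℤ), fun z hz => hmono_u (le_trans hz ?_)⟩
      rwa [natCast_zsmul]
    · obtain ⟨m, hm⟩ := Archimedean.arch (-(N • g)) hu
      refine ⟨-(m : ℤ), ?_⟩
      rw [neg_zsmul, natCast_zsmul]
      exact neg_le.1 hm
  have hadd_le : ∀ a b : G, φ (a + b) ≤ φ a + φ b := by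
    intro a b
    refine csSup_le (hne _) ?_
    rintro r ⟨p, q, hq, rfl, hpu⟩
    have key : ∀ k : ℕ, 0 < k → (p : ℝ) / q ≤ φ a + φ b + 1 / ((k : ℝ) * q) := by
      intro k hk
      set N : ℤ := (k : ℤ) * q with hN
      have hNpos : 0 < N := mul_pos (by exact_mod_cast hk) hq
      obtain ⟨pa, hpa, hpamax⟩ := hgreat a N
      obtain ⟨pb, hpb, hpbmax⟩ := hgreat b N
      have hsa : (pa : ℝ) / N ≤ φ a := hmem_le ⟨pa, N, hNpos, rfl, hpa⟩
      have hsb : (pb : ℝ) / N ≤ φ b := hmem_le ⟨pb, N, hNpos, rfl, hpb⟩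
      have hstep : ((k : ℤ) * p) • u ≤ N • a + N • b := by
        have h1 : ((k : ℤ) * p) • u = (k : ℤ) • (p • u) := mul_zsmul u _ _
        have h2 : (k : ℤ) • (p • u) ≤ (k : ℤ) • (q • (a + b)) :=
          zsmul_le_zsmul_right (by positivity) hpu
        have h3 : (k : ℤ) • (q • (a + b)) = N • (a + b) := (mul_zsmul _ _ _).symm
        rw [← h1, h3] at h2
        rwa [smul_add] at h2
      have hlt : N • a + N • b < (pa + 1) • u + (pb + 1) • u := by
        have l1 : N • a < (pa + 1) • u := by
          by_contra hc
          push_neg at hc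
          have := hpamax _ hc
          omega
        have l2 : N • b < (pb + 1) • u := by
          by_contra hc
          push_neg at hc
          have := hpbmax _ hc
          omega
        exact add_lt_add l1 l2
      have hint : (k : ℤ) * p ≤ pa + pb + 1 := by
        by_contra hc
        push_neg at hc
        have h4 : (pa + 1 + (pb + 1)) • u ≤ ((k : ℤ) * p) • u :=
          zsmul_le_zsmul_left hu.le (by omega)
        have h5 : (pa + 1) • u + (pb + 1) • u = (pa + 1 + (pb + 1)) • u :=
          (add_zsmul u _ _).symm
        have h6 : ((k : ℤ) * p) • u < ((k : ℤ) * p) • u :=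
          lt_of_le_of_lt hstep (lt_of_lt_of_le hlt (by rw [h5]; exact h4))
        exact lt_irrefl _ h6
      have hNR : (0 : ℝ) < (N : ℝ) := by exact_mod_cast hNpos
      have hkR : (0 : ℝ) < (k : ℝ) := by exact_mod_cast hk
      have hqR : (0 : ℝ) < (q : ℝ) := by exact_mod_cast hq
      have e0 : (p : ℝ) / q = ((k : ℝ) * p) / ((k : ℝ) * q) := by
        rw [mul_div_mul_left _ _ (ne_of_gt hkR)]
      have e1 : ((k : ℝ) * q) = (N : ℝ) := by push_cast [hN]; ring
      have e2 : ((k : ℝ) * p) ≤ (pa : ℝ) + pb + 1 := by exact_mod_cast hint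
      calc (p : ℝ) / q = ((k : ℝ) * p) / ((k : ℝ) * q) := e0
        _ = ((k : ℝ) * p) / N := by rw [e1]
        _ ≤ ((pa : ℝ) + pb + 1) / N := by gcongr
        _ = (pa : ℝ) / N + (pb : ℝ) / N + 1 / N := by ring
        _ ≤ φ a + φ b + 1 / N := by gcongr
        _ = φ a + φ b + 1 / ((k : ℝ) * q) := by rw [e1]
    by_contra hc
    push_neg at hc
    have hqR : (0 : ℝ) < (q : ℝ) := by exact_mod_cast hq
    set ε : ℝ := (p : ℝ) / q - (φ a + φ b) with he
    have hε : 0 < ε := by simp only [he]; linarith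
    obtain ⟨k', hkgt'⟩ := exists_nat_gt (1 / (ε * q))
    set k : ℕ := k' + 1 with hkdef
    have hk0 : 0 < k := Nat.succ_pos k'
    have hkgt : 1 / (ε * q) < (k : ℝ) := by
      refine lt_of_lt_of_le hkgt' ?_
      rw [hkdef]
      push_cast
      linarith
    have hkey := key k hk0
    have hkR : (0 : ℝ) < (k : ℝ) := by exact_mod_cast hk0
    have hlt2 : 1 / ((k : ℝ) * q) < ε := by
      rw [div_lt_iff₀ (by positivity)]
      rw [div_lt_iff₀ (by positivity)] at hkgt
      nlinarith
    simp only [he] at hlt2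
    linarith
  refine ⟨φ, fun a b => le_antisymm (hadd_le a b) (hadd_ge a b), hmono, ?_, ?_⟩
  · apply le_antisymm
    · refine csSup_le (hne u) ?_
      rintro r ⟨p, q, hq, rfl, hpu⟩
      have := hmono_u hpu
      rw [div_le_one (by exact_mod_cast hq)]
      exact_mod_cast this
    · exact hmem_le ⟨1, 1, one_pos, by norm_num, le_refl _⟩
  · intro a ha
    obtain ⟨n, hn⟩ := Archimedean.arch u ha
    have hn0 : 0 < n := by
      rcases Nat.eq_zero_or_pos n with h | h
      · subst h; simp at hn; exact absurd (lt_of_lt_of_le hu hn) (lt_irrefl 0)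
      · exact h
    have hmem : 1 / ((n : ℤ) : ℝ) ∈ S a := by
      refine ⟨1, n, by exact_mod_cast hn0, by norm_num, ?_⟩
      rw [one_zsmul, natCast_zsmul]
      exact hn
    have := hmem_le hmem
    have hnR : (0 : ℝ) < ((n : ℤ) : ℝ) := by exact_mod_cast hn0
    calc (0 : ℝ) < 1 / ((n : ℤ) : ℝ) := by positivity
      _ ≤ φ a := this

end Holder
namespace MVAlg

variable {A : Type u}

/-- every simple linearly-ordered MV-algebra admits a normalized real-valued valuation -/
theorem exists_real_hom (M : MVAlg A)
    (lin : ∀ x y : A, M.le x y ∨ M.le y x)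
    (hsimple : ∀ x : A, x ≠ M.zero → ∃ n, M.nsmul n x = M.one)
    (hnt : M.zero ≠ M.one) :
    ∃ h : A → ℝ, h M.zero = 0 ∧ (∀ x, 0 ≤ h x ∧ h x ≤ 1) ∧
      (∀ x, h (M.star x) = 1 - h x) ∧
      (∀ x y, h (M.oplus x y) = min 1 (h x + h y)) ∧
      (∀ x, h x = 0 → x = M.zero) := by
  classical
  letI : AddCommGroup (GC M) := gAddCommGroup lin hnt
  letI : LinearOrder (GC M) := gGroup lin hnt
  haveI : IsOrderedAddMonoid (GC M) := gIsOrd lin hnt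
  have hadd_eq : ∀ a b : GC M, a + b = gadd a b := fun _ _ => rfl
  have hzero_eq : (0 : GC M) = gmk 0 M.zero hnt := rfl
  set u : GC M := gmk 1 M.zero hnt with hu_def
  have hle_mk : ∀ {m n : ℤ} {x y : A} {hx : x ≠ M.one} {hy : y ≠ M.one},
      (gmk m x hx : GC M) ≤ gmk n y hy ↔ (m < n ∨ (m = n ∧ M.le x y)) := fun {m n x y hx hy} =>
    Iff.rfl
  have hu_pos : (0 : GC M) < u := by
    rw [hzero_eq]
    refine lt_of_le_of_ne (hle_mk.2 (Or.inl (by norm_num))) ?_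
    intro hc
    exact absurd (show (0 : ℤ) = 1 from congrArg Prod.fst hc) (by norm_num)
  -- n • u = (n, 0)
  have hnsmul_u : ∀ n : ℕ, (n • u : GC M) = gmk (n : ℤ) M.zero hnt := by
    intro n
    induction n with
    | zero => rw [zero_nsmul]; rfl
    | succ k ih =>
        rw [succ_nsmul, ih, hu_def, hadd_eq, gadd_pair_neg (not_ov_zero_left hnt)]
        refine gmk_ext ?_ (M.oplus_zero M.zero)
        push_cast; ring
  -- u ≤ n • y for positive y
  have harch_u : ∀ y : GC M, 0 < y → ∃ n : ℕ, 0 < n ∧ u ≤ n • y := by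
    intro y hy
    have hyv : y = gmk y.1 y.2.1 y.2.2 := rfl
    by_cases hpos : (0 : ℤ) < y.1
    · refine ⟨1, one_pos, ?_⟩
      rw [one_nsmul, hyv, hu_def, hle_mk]
      rcases lt_or_eq_of_le (show (1:ℤ) ≤ y.1 from hpos) with h | h
      · exact Or.inl h
      · exact Or.inr ⟨h, M.bot_le _⟩
    · have hy0 : (0 : GC M) ≤ y := le_of_lt hy
      rw [hzero_eq, hyv, hle_mk] at hy0
      have hp0 : y.1 = 0 := by rcases hy0 with h | ⟨h, -⟩ <;> omega
      set b : A := y.2.1 with hbdef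
      set hb1 : b ≠ M.one := y.2.2 with hb1def
      have hyv2 : y = gmk 0 b hb1 := by rw [hyv]; exact gmk_ext hp0 rfl
      have hbne : b ≠ M.zero := by
        intro hc
        apply ne_of_gt hy
        rw [hyv2, hzero_eq]
        exact gmk_ext rfl hc
      have hex : ∃ k, M.nsmul k b = M.one := hsimple b hbne
      set n := Nat.find hex with hn_def
      have hn : M.nsmul n b = M.one := Nat.find_spec hex
      have hmin : ∀ k, k < n → M.nsmul k b ≠ M.one := fun k hk => Nat.find_min hex hk
      have hn1 : 0 < n := by
        rcases Nat.eq_zero_or_pos n with h | h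
        · exfalso; apply hnt; rw [← hn, h]; rfl
        · exact h
      rw [hyv2]
      have hstep : ∀ k, ∀ hk : k < n, (k • (gmk 0 b hb1 : GC M) : GC M) =
          gmk 0 (M.nsmul k b) (fun hc => hmin k hk hc) := by
        intro k
        induction k with
        | zero => intro hk; rw [zero_nsmul]; exact gmk_ext rfl rfl
        | succ j ih =>
            intro hk
            have hjk : j < n := Nat.lt_of_succ_lt hk
            rw [succ_nsmul, ih hjk, hadd_eq]
            have hcond : ¬ M.le (M.star (M.nsmul j b)) b := by
              intro hc
              apply hmin (j+1) hk
              have h2 : M.oplus (M.nsmul j b) b = M.one := M.oplus_eq_one_iff.2 hc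
              show M.oplus b (M.nsmul j b) = M.one
              rwa [M.oplus_comm]
            rw [gadd_pair_neg hcond]
            exact gmk_ext rfl (M.oplus_comm _ _)
      refine ⟨n, hn1, ?_⟩
      have hpred : n - 1 < n := by omega
      have hsplit : (n • (gmk 0 b hb1 : GC M) : GC M) =
          (n - 1) • (gmk 0 b hb1 : GC M) + (gmk 0 b hb1 : GC M) := by
        conv_lhs => rw [show n = (n - 1) + 1 by omega, succ_nsmul]
      rw [hsplit, hstep (n-1) hpred, hadd_eq]
      have hcond : M.le (M.star (M.nsmul (n-1) b)) b := by
        refine M.oplus_eq_one_iff.1 ?_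
        rw [M.oplus_comm]
        show M.oplus b (M.nsmul (n-1) b) = M.one
        rw [← hn]
        conv_rhs => rw [show n = (n-1) + 1 by omega]
        rfl
      rw [gadd_pair_pos hcond, hu_def, hle_mk]
      exact Or.inr ⟨by norm_num, M.bot_le _⟩
  letI : Archimedean (GC M) := by
    constructor
    intro x y hy
    obtain ⟨n, hn0, hn⟩ := harch_u y hy
    set m : ℕ := (x.1 + 1).toNat with hm
    have h1 : x ≤ m • u := by
      rw [hnsmul_u m]
      have hxv : x = gmk x.1 x.2.1 x.2.2 := rfl
      rw [hxv, hle_mk]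
      refine Or.inl ?_
      have := Int.self_le_toNat (x.1 + 1)
      omega
    have h2 : (m • u : GC M) ≤ m • (n • y) := by
      rw [← natCast_zsmul, ← natCast_zsmul (n • y)]
      exact zsmul_le_zsmul_right (by positivity) hn
    exact ⟨n * m, h1.trans (h2.trans (le_of_eq (mul_nsmul y n m).symm))⟩
  obtain ⟨φ, φadd, φmono, φu, φpos⟩ := holder_exists hu_pos
  have φ0 : φ 0 = 0 := by
    have := φadd 0 0
    rw [add_zero] at this
    linarith
  set ι : A → GC M := fun x => if hx : x = M.one then u else gmk 0 x hx with hι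
  set h : A → ℝ := fun x => φ (ι x) with hh
  have hι_one : ι M.one = u := dif_pos rfl
  have hι_ne : ∀ x (hx : x ≠ M.one), ι x = gmk 0 x hx := fun x hx => dif_neg hx
  have hι_zero : ι M.zero = 0 := by rw [hι_ne M.zero hnt]; rfl
  have h_one : h M.one = 1 := by simp only [hh]; rw [hι_one]; exact φu
  have h_zero : h M.zero = 0 := by simp only [hh]; rw [hι_zero]; exact φ0
  have h_nonneg : ∀ x, 0 ≤ h x := by
    intro x
    simp only [hh]
    rw [← φ0]
    apply φmono
    by_cases hx : x = M.one
    · rw [hx, hι_one]; exact le_of_lt hu_pos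
    · rw [hι_ne x hx, hzero_eq, hle_mk]; exact Or.inr ⟨rfl, M.bot_le _⟩
  have h_le_one : ∀ x, h x ≤ 1 := by
    intro x
    simp only [hh]
    rw [← φu]
    apply φmono
    by_cases hx : x = M.one
    · rw [hx, hι_one]
    · rw [hι_ne x hx, hu_def, hle_mk]; exact Or.inl (by norm_num)
  have h_star : ∀ x, h (M.star x) = 1 - h x := by
    intro x
    by_cases hx1 : x = M.one
    · subst hx1
      simp only [hh]
      rw [M.star_one, hι_zero, hι_one, φ0, φu]
      norm_num
    · by_cases hx0 : x = M.zero
      · subst hx0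
        simp only [hh]
        rw [show M.star M.zero = M.one from rfl, hι_one, hι_zero, φ0, φu]
        norm_num
      · have hsx : M.star x ≠ M.one := fun hc => hx0 (by
          have := congrArg M.star hc
          rwa [M.star_star, M.star_one] at this)
        have key : ι (M.star x) + ι x = u := by
          rw [hι_ne _ hsx, hι_ne _ hx1, hadd_eq]
          have hcond : M.le (M.star (M.star x)) x := by
            rw [M.star_star]; exact M.le_refl x
          rw [gadd_pair_pos hcond, hu_def]
          refine gmk_ext (by norm_num) ?_
          rw [M.odot_comm]; exact M.odot_star_self x
        have heq := φadd (ι (M.star x)) (ι x)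
        rw [key, φu] at heq
        simp only [hh]
        linarith
  have h_oplus : ∀ x y, h (M.oplus x y) = min 1 (h x + h y) := by
    intro x y
    by_cases hx1 : x = M.one
    · subst hx1
      rw [M.one_oplus, h_one]
      have h2 := h_nonneg y
      rw [min_eq_left (by linarith)]
    · by_cases hy1 : y = M.one
      · rw [hy1, M.oplus_one', h_one]
        have h2 := h_nonneg x
        rw [min_eq_left (by linarith)]
      · by_cases hov : M.le (M.star x) y
        · have hxy1 : M.oplus x y = M.one := M.oplus_eq_one_iff.2 hov
          rw [hxy1, h_one]
          have key : ι x + ι y =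
              gmk 1 (M.odot x y) (fun hc => hx1 (M.odot_eq_one hc)) := by
            rw [hι_ne _ hx1, hι_ne _ hy1, hadd_eq, gadd_pair_pos hov]
            exact gmk_ext (by norm_num) rfl
          have hge : (1 : ℝ) ≤ h x + h y := by
            have e := φadd (ι x) (ι y)
            rw [key] at e
            have hge2 : u ≤ (gmk 1 (M.odot x y) (fun hc => hx1 (M.odot_eq_one hc)) : GC M) := by
              rw [hu_def, hle_mk]; exact Or.inr ⟨rfl, M.bot_le _⟩
            have h3 := φmono _ _ hge2
            rw [φu] at h3
            simp only [hh]
            linarith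
          rw [min_eq_left hge]
        · have hxy1 : M.oplus x y ≠ M.one := fun hc => hov (M.oplus_eq_one_iff.1 hc)
          have key : ι x + ι y = ι (M.oplus x y) := by
            rw [hι_ne _ hx1, hι_ne _ hy1, hι_ne _ hxy1, hadd_eq, gadd_pair_neg hov]
            exact gmk_ext (by norm_num) rfl
          have e := φadd (ι x) (ι y)
          rw [key] at e
          have hle : h (M.oplus x y) ≤ 1 := h_le_one _
          simp only [hh] at e ⊢
          rw [min_eq_right (by linarith)]
          linarith
  have h_ker : ∀ x, h x = 0 → x = M.zero := by
    intro x hx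
    by_cases hx1 : x = M.one
    · exfalso; rw [hx1, h_one] at hx; norm_num at hx
    · by_contra hxz
      have hpos : (0 : GC M) < ι x := by
        rw [hι_ne _ hx1, hzero_eq]
        refine lt_of_le_of_ne (hle_mk.2 (Or.inr ⟨rfl, M.bot_le _⟩)) ?_
        intro hc
        apply hxz
        exact (congrArg (fun g : GC M => g.2.1) hc).symm
      have := φpos _ hpos
      simp only [hh] at hx
      linarith
  exact ⟨h, h_zero, fun x => ⟨h_nonneg x, h_le_one x⟩, h_star, h_oplus, h_ker⟩

end MVAlg
namespace MVAlg

variable {A : Type u}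

theorem exists_hom_of_maximal (M : MVAlg A) {I : Set A} (hmax : M.IsMaximalIdeal I) :
    ∃ h : A → ℝ, (∀ x, 0 ≤ h x ∧ h x ≤ 1) ∧ h M.zero = 0 ∧
      (∀ x, h (M.star x) = 1 - h x) ∧
      (∀ x y, h (M.oplus x y) = min 1 (h x + h y)) ∧
      (∀ x, h x = 0 ↔ x ∈ I) := by
  have hI := hmax.1
  obtain ⟨h0, hz, hb, hs, ho, hk⟩ :=
    exists_real_hom (M.quotAlg hI) (M.quot_linear hI hmax) (M.quot_simple hI hmax)
      (M.quot_zero_ne_one hI hmax)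
  refine ⟨fun x => h0 (Quotient.mk _ x), fun x => hb _, ?_, ?_, ?_, ?_⟩
  · show h0 (Quotient.mk _ M.zero) = 0
    rw [← M.quot_mk_zero hI]
    exact hz
  · intro x
    show h0 (Quotient.mk _ (M.star x)) = 1 - h0 (Quotient.mk _ x)
    rw [← M.quot_mk_star hI]
    exact hs _
  · intro x y
    show h0 (Quotient.mk _ (M.oplus x y)) = _
    rw [← M.quot_mk_oplus hI]
    exact ho _ _
  · intro x
    constructor
    · intro hx
      have := hk _ hx
      exact (M.quot_mk_eq_zero_iff hI).1 this
    · intro hx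
      have : Quotient.mk (M.idealSetoid hI) x = (M.quotAlg hI).zero :=
        (M.quot_mk_eq_zero_iff hI).2 hx
      show h0 (Quotient.mk _ x) = 0
      rw [this]
      exact hz

end MVAlg
section FunAlg

variable (ι : Type u)

/-- the PMV-algebra of `[0,1]`-valued functions -/
def funAlg : PMVAlg (ι → {r : ℝ // 0 ≤ r ∧ r ≤ 1}) where
  oplus f g := fun i => ⟨min 1 ((f i : ℝ) + g i), by
    constructor
    · exact le_min (by norm_num) (add_nonneg (f i).2.1 (g i).2.1)
    · exact min_le_left _ _⟩
  star f := fun i => ⟨1 - f i, by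
    constructor
    · linarith [(f i).2.2]
    · linarith [(f i).2.1]⟩
  zero := fun _ => ⟨0, le_refl 0, by norm_num⟩
  oplus_comm := by
    intro f g; funext i; apply Subtype.ext
    show min 1 ((f i : ℝ) + g i) = min 1 ((g i : ℝ) + f i)
    rw [add_comm]
  oplus_assoc := by
    intro f g h; funext i; apply Subtype.ext
    show min 1 (min 1 ((f i : ℝ) + g i) + h i) = min 1 ((f i : ℝ) + min 1 ((g i : ℝ) + h i))
    obtain ⟨h1, h2⟩ := (f i).2
    obtain ⟨h3, h4⟩ := (g i).2
    obtain ⟨h5, h6⟩ := (h i).2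
    simp only [min_def]
    split_ifs <;> linarith
  oplus_zero := by
    intro f; funext i; apply Subtype.ext
    show min 1 ((f i : ℝ) + 0) = f i
    obtain ⟨h1, h2⟩ := (f i).2
    rw [add_zero]
    exact min_eq_right h2
  star_star := by
    intro f; funext i; apply Subtype.ext
    show 1 - (1 - (f i : ℝ)) = f i
    ring
  oplus_one := by
    intro f; funext i; apply Subtype.ext
    show min 1 ((f i : ℝ) + (1 - 0)) = 1 - 0
    obtain ⟨h1, h2⟩ := (f i).2
    rw [min_eq_left (by linarith)]
    norm_num
  luk := by
    intro f g; funext i; apply Subtype.ext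
    show min 1 ((1 - min 1 ((1 - (f i : ℝ)) + g i)) + g i)
        = min 1 ((1 - min 1 ((1 - (g i : ℝ)) + f i)) + f i)
    obtain ⟨h1, h2⟩ := (f i).2
    obtain ⟨h3, h4⟩ := (g i).2
    simp only [min_def]
    split_ifs <;> linarith
  mul f g := fun i => ⟨(f i : ℝ) * g i, by
    constructor
    · exact mul_nonneg (f i).2.1 (g i).2.1
    · nlinarith [(f i).2.1, (f i).2.2, (g i).2.1, (g i).2.2]⟩
  mul_assoc := by
    intro f g h; funext i; apply Subtype.ext
    show ((f i : ℝ) * g i) * h i = (f i : ℝ) * ((g i : ℝ) * h i)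
    ring
  mul_comm := by
    intro f g; funext i; apply Subtype.ext
    show (f i : ℝ) * g i = (g i : ℝ) * f i
    ring
  mul_one := by
    intro f; funext i; apply Subtype.ext
    show (f i : ℝ) * (1 - 0) = f i
    ring
  mul_linear_right := by
    intro x y z hle
    have hle' : ∀ i, (y i : ℝ) + z i ≤ 1 := by
      intro i
      have h2 := congrArg Subtype.val (congrFun hle i)
      have h3 : min 1 ((1 - (y i : ℝ)) + (1 - (z i : ℝ))) = 1 - 0 := h2
      by_contra hc
      push_neg at hc
      rw [min_eq_right (by linarith)] at h3
      linarith
    funext i; apply Subtype.ext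
    show (x i : ℝ) * min 1 ((y i : ℝ) + z i) = min 1 ((x i : ℝ) * y i + (x i : ℝ) * z i)
    obtain ⟨h1, h2⟩ := (x i).2
    obtain ⟨h3, h4⟩ := (y i).2
    obtain ⟨h5, h6⟩ := (z i).2
    have h7 := hle' i
    rw [min_eq_right h7, min_eq_right (by nlinarith)]
    ring
  mul_linear_left := by
    intro x y z hle
    have hle' : ∀ i, (x i : ℝ) + y i ≤ 1 := by
      intro i
      have h2 := congrArg Subtype.val (congrFun hle i)
      have h3 : min 1 ((1 - (x i : ℝ)) + (1 - (y i : ℝ))) = 1 - 0 := h2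
      by_contra hc
      push_neg at hc
      rw [min_eq_right (by linarith)] at h3
      linarith
    funext i; apply Subtype.ext
    show min 1 ((x i : ℝ) + y i) * (z i : ℝ) = min 1 ((x i : ℝ) * z i + (y i : ℝ) * z i)
    obtain ⟨h1, h2⟩ := (x i).2
    obtain ⟨h3, h4⟩ := (y i).2
    obtain ⟨h5, h6⟩ := (z i).2
    have h7 := hle' i
    rw [min_eq_right h7, min_eq_right (by nlinarith)]
    ring

variable {ι}

lemma funAlg_le_iff {f g : ι → {r : ℝ // 0 ≤ r ∧ r ≤ 1}} :
    (funAlg ι).toMVAlg.le f g ↔ ∀ i, (f i : ℝ) ≤ g i := by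
  constructor
  · intro h i
    have h2 := congrArg Subtype.val (congrFun h i)
    have h3 : min 1 ((1 - (f i : ℝ)) + g i) = 1 - 0 := h2
    by_contra hc
    push_neg at hc
    rw [min_eq_right (by linarith)] at h3
    linarith
  · intro h
    funext i; apply Subtype.ext
    show min 1 ((1 - (f i : ℝ)) + g i) = 1 - 0
    rw [min_eq_left (by linarith [h i, (f i).2.1, (g i).2.1])]
    norm_num
lemma funAlg_nsmul_coe (f : ι → {r : ℝ // 0 ≤ r ∧ r ≤ 1}) (n : ℕ) (i : ι) :
    (((funAlg ι).toMVAlg.nsmul n f) i : ℝ) = min 1 (n * (f i : ℝ)) := by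
  induction n with
  | zero =>
      rw [Nat.cast_zero, zero_mul, min_eq_right (by norm_num : (0:ℝ) ≤ 1)]
      rfl
  | succ k ih =>
      show min 1 ((f i : ℝ) + (((funAlg ι).toMVAlg.nsmul k f) i : ℝ)) = _
      rw [ih]
      obtain ⟨h1, h2⟩ := (f i).2
      have hk : (0:ℝ) ≤ k * (f i : ℝ) := by positivity
      push_cast
      simp only [min_def]
      split_ifs <;> nlinarith

lemma funAlg_nsmul_mem {J : Set (ι → {r : ℝ // 0 ≤ r ∧ r ≤ 1})}
    (hJ : (funAlg ι).toMVAlg.IsIdeal J) {f} (hf : f ∈ J) (n : ℕ) :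
    (funAlg ι).toMVAlg.nsmul n f ∈ J := by
  induction n with
  | zero => exact hJ.1
  | succ k ih => exact hJ.2.1 _ hf _ ih

lemma funAlg_semisimple : (funAlg ι).Semisimple := by
  classical
  show (funAlg ι).toMVAlg.Semisimple
  set P := (funAlg ι).toMVAlg with hP
  ext g
  simp only [Set.mem_setOf_eq, Set.mem_singleton_iff]
  constructor
  · intro hg
    funext j
    apply Subtype.ext
    show (g j : ℝ) = 0
    set Ij : Set (ι → {r : ℝ // 0 ≤ r ∧ r ≤ 1}) := {f | (f j : ℝ) = 0} with hIj
    have hIdeal : P.IsIdeal Ij := by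
      refine ⟨rfl, ?_, ?_⟩
      · intro f hf f' hf'
        show min 1 ((f j : ℝ) + f' j) = 0
        rw [Set.mem_setOf_eq] at hf hf'
        rw [hf, hf']
        norm_num
      · intro f f' hle hf'
        rw [Set.mem_setOf_eq] at hf' ⊢
        have := (funAlg_le_iff.1 hle) j
        have h0 := (f j).2.1
        linarith
    have hne : Ij ≠ Set.univ := by
      intro hc
      have : P.one ∈ Ij := hc ▸ Set.mem_univ _
      have h2 : ((P.one : ι → {r : ℝ // 0 ≤ r ∧ r ≤ 1}) j : ℝ) = 0 := this
      have h3 : ((P.one : ι → {r : ℝ // 0 ≤ r ∧ r ≤ 1}) j : ℝ) = 1 - 0 := rfl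
      rw [h3] at h2
      norm_num at h2
    have hmax : P.IsMaximalIdeal Ij := by
      refine ⟨hIdeal, hne, ?_⟩
      intro J hJ hJne hsub
      refine Set.Subset.antisymm ?_ hsub
      intro f hf
      by_contra hfj
      rw [Set.mem_setOf_eq] at hfj
      have ha : (0:ℝ) < f j := lt_of_le_of_ne (f j).2.1 (Ne.symm hfj)
      obtain ⟨n, hn⟩ := Archimedean.arch (1:ℝ) ha
      rw [nsmul_eq_mul] at hn
      apply hJne
      ext htar
      simp only [Set.mem_univ, iff_true]
      set h' : ι → {r : ℝ // 0 ≤ r ∧ r ≤ 1} :=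
        Function.update htar j ⟨0, le_refl 0, by norm_num⟩ with hh'
      have hh'mem : h' ∈ J := by
        apply hsub
        show (h' j : ℝ) = 0
        rw [hh', Function.update_self]
      have hsum : P.oplus h' (P.nsmul n f) ∈ J :=
        hJ.2.1 _ hh'mem _ (funAlg_nsmul_mem hJ hf n)
      refine hJ.2.2 _ _ ?_ hsum
      rw [funAlg_le_iff]
      intro i
      by_cases hi : i = j
      · subst hi
        show (htar i : ℝ) ≤ min 1 ((h' i : ℝ) + _)
        have e1 : (h' i : ℝ) = 0 := by rw [hh', Function.update_self]
        have e2 : ((P.nsmul n f) i : ℝ) = min 1 (n * (f i : ℝ)) := funAlg_nsmul_coe f n i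
        rw [e1, e2, zero_add, min_eq_left (by rw [min_def]; split_ifs <;> linarith)]
        · exact (htar i).2.2
      · show (htar i : ℝ) ≤ min 1 ((h' i : ℝ) + ((P.nsmul n f) i : ℝ))
        have e1 : (h' i : ℝ) = htar i := by rw [hh', Function.update_of_ne hi]
        rw [e1]
        have h2 := ((P.nsmul n f) i).2.1
        have h3 := (htar i).2.2
        exact le_min h3 (by linarith)
    have := hg Ij hmax
    exact this
  · intro hg
    rw [hg]
    intro I hI
    exact hI.1.1

end FunAlg
/-- Every semisimple MV-algebra admits an injective MV-algebra homomorphism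
into a unital commutative semisimple PMV-algebra. -/
theorem stmt4 {A : Type u} (M : MVAlg A) (hM : M.Semisimple) :
    ∃ (B : Type u) (P : PMVAlg B) (f : A → B),
      P.Semisimple ∧ MVHom M P.toMVAlg f ∧ Function.Injective f := by
  classical
  choose h hb hz hs ho hk using fun (I : {I : Set A // M.IsMaximalIdeal I}) =>
    M.exists_hom_of_maximal I.2
  set f : A → ({I : Set A // M.IsMaximalIdeal I} → {r : ℝ // 0 ≤ r ∧ r ≤ 1}) :=
    fun a J => ⟨h J a, hb J a⟩ with hf
  refine ⟨_, funAlg {I : Set A // M.IsMaximalIdeal I}, f, funAlg_semisimple, ⟨?_, ?_, ?_⟩, ?_⟩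
  · intro x y
    funext J; apply Subtype.ext
    show h J (M.oplus x y) = min 1 (h J x + h J y)
    exact ho J x y
  · intro x
    funext J; apply Subtype.ext
    show h J (M.star x) = 1 - h J x
    exact hs J x
  · funext J; apply Subtype.ext
    exact hz J
  · intro x y hxy
    have hcoord : ∀ J, h J x = h J y :=
      fun J => congrArg Subtype.val (congrFun hxy J)
    have hker : ∀ x y : A, (∀ J, h J x = h J y) → M.le x y := by
      intro x y hco
      have hmem : M.sub x y ∈ {w | ∀ I, M.IsMaximalIdeal I → w ∈ I} := by
        intro I hI
        refine (hk ⟨I, hI⟩ (M.sub x y)).1 ?_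
        have e1 : M.sub x y = M.star (M.oplus (M.star x) y) := rfl
        rw [e1, hs, ho, hs, hco ⟨I, hI⟩]
        have e2 : (1 - h ⟨I, hI⟩ y) + h ⟨I, hI⟩ y = 1 := by ring
        rw [e2, min_self]
        ring
      rw [hM, Set.mem_singleton_iff] at hmem
      exact M.le_iff_sub_eq_zero.2 hmem
    exact M.le_antisymm (hker x y hcoord) (hker y x fun J => (hcoord J).symm)
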